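/- arXiv:2201.02687 — 14 statements merged into one kernel-verified Lean document; each statement's English description precedes it below -/
import Mathlib

section
/- Let n ≥ 1 and c > 1 be a real number. Define ψ(μ) = μ^{n+2} + (c−1)μ − c. Then the polynomial c + μ + μ² + ⋯ + μ^{n+1} has no repeated complex roots, i.e., there is no μ₀ ∈ ℂ with ψ(μ₀) = 0, ψ'(μ₀) = 0 and μ₀ ≠ 1. -/
/-- The polynomial `c + μ + μ² + ⋯ + μ^{n+1}` (with real `c > 1`, `n ≥ 1`) has no
repeated complex roots: there is no `μ₀ ∈ ℂ` with `ψ(μ₀) = 0`, `ψ'(μ₀) = 0` and `μ₀ ≠ 1`,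
where `ψ(μ) = μ^{n+2} + (c−1)μ − c`. -/
theorem stmt0 (n : ℕ) (hn : 1 ≤ n) (c : ℝ) (hc : 1 < c) :
    ¬ ∃ μ₀ : ℂ, μ₀ ^ (n + 2) + ((c : ℂ) - 1) * μ₀ - (c : ℂ) = 0 ∧
      deriv (fun μ : ℂ => μ ^ (n + 2) + ((c : ℂ) - 1) * μ - (c : ℂ)) μ₀ = 0 ∧ μ₀ ≠ 1 := by
  rintro ⟨μ, h0, hd, -⟩
  have hD : HasDerivAt (fun μ : ℂ => μ ^ (n + 2) + ((c : ℂ) - 1) * μ - (c : ℂ))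
      (((n : ℂ) + 2) * μ ^ (n + 1) + ((c : ℂ) - 1)) μ := by
    have h1 := hasDerivAt_pow (n + 2) μ
    have h2 : HasDerivAt (fun μ : ℂ => ((c : ℂ) - 1) * μ) ((c : ℂ) - 1) μ := by
      simpa using (hasDerivAt_id μ).const_mul ((c : ℂ) - 1)
    have := (h1.add h2).sub_const (c : ℂ)
    refine this.congr_deriv ?_
    push_cast
    ring_nf
  rw [hD.deriv] at hd
  have hc1 : ((c : ℂ) - 1) ≠ 0 := by
    intro h
    have : (c : ℂ) = 1 := by linear_combination h
    have : c = 1 := by exact_mod_cast this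
    linarith
  have hn2 : ((n : ℂ) + 2) ≠ 0 := by
    intro h
    have : ((n : ℝ) + 2) = 0 := by exact_mod_cast congrArg Complex.re h
    have : (0:ℝ) ≤ (n:ℝ) := Nat.cast_nonneg n
    linarith
  have hn1 : ((n : ℂ) + 1) ≠ 0 := by
    intro h
    have : ((n : ℝ) + 1) = 0 := by exact_mod_cast congrArg Complex.re h
    have : (0:ℝ) ≤ (n:ℝ) := Nat.cast_nonneg n
    linarith
  -- from the two equations, μ is determined
  have key : μ * (((c : ℂ) - 1) * ((n : ℂ) + 1)) = (c : ℂ) * ((n : ℂ) + 2) := by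
    have hpow : μ ^ (n + 2) = μ ^ (n + 1) * μ := by ring
    linear_combination ((n : ℂ) + 2) * h0 - μ * hd + ((n:ℂ)+2) * hpow
  set r : ℝ := c * (n + 2) / ((c - 1) * (n + 1)) with hr_def
  have hr_pos : 0 < r := by
    apply div_pos
    · positivity
    · have : (0:ℝ) < c - 1 := by linarith
      positivity
  have hμ : μ = (r : ℂ) := by
    rw [hr_def]
    push_cast
    rw [eq_div_iff (mul_ne_zero hc1 hn1)]
    exact key
  -- μ^(n+1) is a positive real, but also equals a negative real
  have hpow : ((r : ℂ)) ^ (n + 1) = -((c : ℂ) - 1) / ((n : ℂ) + 2) := by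
    rw [← hμ]
    field_simp
    linear_combination hd
  have hreal : (r : ℝ) ^ (n + 1) = -(c - 1) / ((n : ℝ) + 2) := by
    have := hpow
    push_cast at this
    exact_mod_cast this
  have h1 : (0:ℝ) < r ^ (n + 1) := by positivity
  have h2 : -(c - 1) / ((n : ℝ) + 2) < 0 := by
    apply div_neg_of_neg_of_pos
    · linarith
    · have : (0:ℝ) ≤ (n:ℝ) := Nat.cast_nonneg n
      linarith
  linarith
end

section
/- Let n ≥ 1 and c > 1. If μ ∈ ℂ satisfies c + μ + μ² + ⋯ + μ^{n+1} = 0, then |μ| > 1. -/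
/-- If `c > 1`, `n ≥ 1` and `μ ∈ ℂ` satisfies `c + μ + ⋯ + μ^{n+1} = 0`, then `|μ| > 1`. -/
theorem stmt1 (n : ℕ) (hn : 1 ≤ n) (c : ℝ) (hc : 1 < c) (μ : ℂ)
    (hroot : (c : ℂ) + ∑ l ∈ Finset.range (n + 1), μ ^ (l + 1) = 0) :
    1 < ‖μ‖ := by
  by_contra hcon
  push_neg at hcon
  have habs : 0 ≤ ‖μ‖ := norm_nonneg μ
  set r := ‖μ‖ with hr
  have hsum : ∑ l ∈ Finset.range (n+1), μ ^ (l+1) = -(c:ℂ) := by linear_combination hroot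
  have htel : ∑ l ∈ Finset.range (n+1), (μ ^ (l+1) - μ ^ (l+1+1)) = μ ^ (0+1) - μ ^ (n+1+1) :=
    Finset.sum_range_sub' (fun i => μ ^ (i+1)) (n+1)
  have hkey : μ ^ (n+2) = (c:ℂ) + (1 - c) * μ := by
    have h1 : (1 - μ) * ∑ l ∈ Finset.range (n+1), μ ^ (l+1) = μ - μ ^ (n+2) := by
      rw [Finset.mul_sum]
      calc ∑ l ∈ Finset.range (n+1), (1-μ) * μ^(l+1)
          = ∑ l ∈ Finset.range (n+1), (μ^(l+1) - μ^(l+1+1)) := by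
            apply Finset.sum_congr rfl; intro l _; ring
        _ = μ^(0+1) - μ^(n+1+1) := htel
        _ = μ - μ^(n+2) := by ring_nf
    rw [hsum] at h1
    linear_combination h1
  have hkabs : r ^ (n+2) = ‖(c:ℂ) + (1-c)*μ‖ := by
    rw [hr, ← norm_pow, hkey]
  have hw : ‖(1-(c:ℂ))*μ‖ = (c-1)*r := by
    rw [norm_mul, hr]
    congr 1
    rw [show (1-(c:ℂ)) = ((1-c:ℝ):ℂ) by push_cast; ring, Complex.norm_real, Real.norm_eq_abs,
      abs_of_nonpos (by linarith)]
    ring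
  have htri : c ≤ ‖(c:ℂ) + (1-c)*μ‖ + (c-1)*r := by
    calc c = ‖(c:ℂ)‖ := by rw [Complex.norm_real, Real.norm_eq_abs, abs_of_pos (by linarith)]
      _ = ‖((c:ℂ)+(1-c)*μ) - (1-c)*μ‖ := by ring_nf
      _ ≤ ‖(c:ℂ)+(1-c)*μ‖ + ‖(1-(c:ℂ))*μ‖ := by
            have := norm_sub_le ((c:ℂ)+(1-c)*μ) ((1-c)*μ)
            simpa using this
      _ = ‖(c:ℂ)+(1-c)*μ‖ + (c-1)*r := by rw [hw]
  have hpow : r ^ (n+2) ≤ r := by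
    calc r ^ (n+2) ≤ r ^ 1 := pow_le_pow_of_le_one habs hcon (by omega)
      _ = r := pow_one r
  -- c ≤ r^{n+2} + (c-1) r ≤ r + (c-1) r = c r  ⇒  r ≥ 1
  have hr1 : r = 1 := by
    have h2 : c ≤ r ^ (n+2) + (c-1)*r := by rw [hkabs]; exact htri
    nlinarith
  have hz1 : ‖(c:ℂ) + (1-c)*μ‖ = 1 := by
    rw [← hkabs, hr1, one_pow]
  -- squared modulus analysis
  have hnsq : Complex.normSq ((c:ℂ) + (1-c)*μ) = 1 := by
    rw [← Complex.sq_norm, hz1, one_pow]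
  have hmun : Complex.normSq μ = 1 := by
    rw [← Complex.sq_norm, ← hr, hr1, one_pow]
  set a := μ.re with ha'
  set b := μ.im with hb'
  have E2 : a^2 + b^2 = 1 := by
    rw [Complex.normSq_apply] at hmun; linarith [hmun, sq_abs a]
  have E1 : (c + (1-c)*a)^2 + ((1-c)*b)^2 = 1 := by
    rw [Complex.normSq_apply] at hnsq
    simp only [Complex.add_re, Complex.add_im, Complex.mul_re, Complex.mul_im,
      Complex.ofReal_re, Complex.ofReal_im, Complex.sub_re, Complex.sub_im,
      Complex.one_re, Complex.one_im] at hnsq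
    nlinarith [hnsq]
  have ha1 : a = 1 := by
    have h4 : 2*c*(1-c)*(a-1) = 0 := by linear_combination E1 - (1-c)^2 * E2
    have h5 : 2*c*(1-c) ≠ 0 := ne_of_lt (by nlinarith)
    have := mul_eq_zero.mp h4
    rcases this with h | h
    · exact absurd h h5
    · linarith
  have hb0 : b = 0 := by
    have hb2 : b^2 = 0 := by linear_combination E2 - (a+1)*ha1
    exact pow_eq_zero_iff (by norm_num) |>.mp hb2
  have hmu : μ = 1 := Complex.ext (by simp [← ha', ha1]) (by simp [← hb', hb0])
  rw [hmu] at hsum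
  simp at hsum
  have hre := congrArg Complex.re hsum
  push_cast at hre
  simp at hre
  nlinarith [Nat.cast_nonneg (α := ℝ) n]
end

section
/- Let n ≥ 1 and c > 1. If μ ∈ ℂ satisfies c + μ + μ² + ⋯ + μ^{n+1} = 0, then |μ|^{n+1} < 2c − 1. -/
/-- If `c > 1`, `n ≥ 1` and `μ ∈ ℂ` satisfies `c + μ + ⋯ + μ^{n+1} = 0`,
then `|μ|^{n+1} < 2c − 1`. -/
theorem stmt2 (n : ℕ) (hn : 1 ≤ n) (c : ℝ) (hc : 1 < c) (μ : ℂ)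
    (hroot : (c : ℂ) + ∑ l ∈ Finset.range (n + 1), μ ^ (l + 1) = 0) :
    ‖μ‖ ^ (n + 1) < 2 * c - 1 := by
  set r : ℝ := ‖μ‖ with hr
  have hsum : ∑ l ∈ Finset.range (n+1), μ^(l+1)
      = μ * ∑ l ∈ Finset.range (n+1), μ^l := by
    rw [Finset.mul_sum]
    exact Finset.sum_congr rfl fun i _ => by ring
  rw [hsum] at hroot
  have g : (∑ l ∈ Finset.range (n+1), μ^l) * (μ - 1) = μ^(n+1) - 1 :=
    geom_sum_mul μ (n+1)
  have key : μ^(n+2) = (c : ℂ) - ((c : ℂ) - 1) * μ := by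
    linear_combination (μ - 1) * hroot - μ * g
  have hc1 : (0:ℝ) < c - 1 := by linarith
  -- upper bound
  have h1 : r ^ (n+2) ≤ c + (c-1) * r := by
    have : r ^ (n+2) = ‖((c : ℂ) - ((c : ℂ) - 1) * μ)‖ := by
      rw [hr, ← norm_pow, key]
    rw [this]
    calc ‖((c : ℂ) - ((c : ℂ) - 1) * μ)‖
        ≤ ‖(c : ℂ)‖ + ‖(((c : ℂ) - 1) * μ)‖ := by
          simpa [sub_eq_add_neg] using
            norm_add_le ((c : ℂ)) (-(((c : ℂ) - 1) * μ))
      _ = c + (c-1) * r := by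
          rw [norm_mul]
          have h2 : ‖(c : ℂ)‖ = c := by
            simp [abs_of_pos (by linarith : (0:ℝ) < c)]
          have h3 : ‖((c : ℂ) - 1)‖ = c - 1 := by
            have : ((c : ℂ) - 1) = ((c - 1 : ℝ) : ℂ) := by push_cast; ring
            rw [this, Complex.norm_real, Real.norm_eq_abs, abs_of_pos hc1]
          rw [h2, h3]
  -- lower bound via real parts
  have h2 : c - (c-1) * μ.re ≤ r ^ (n+2) := by
    have : ((c : ℂ) - ((c : ℂ) - 1) * μ).re = c - (c-1) * μ.re := by
      simp [Complex.sub_re, Complex.mul_re]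
    have hle := Complex.re_le_norm ((c : ℂ) - ((c : ℂ) - 1) * μ)
    rw [this] at hle
    rwa [← key, norm_pow] at hle
  have hre : μ.re ≤ r := Complex.re_le_norm μ
  have hr0 : 0 ≤ r := norm_nonneg μ
  -- show r > 1
  have hr1 : 1 < r := by
    by_contra hle
    push_neg at hle
    have hpow : r ^ (n+2) ≤ 1 := pow_le_one₀ hr0 hle
    have e1 : r = 1 := by nlinarith
    have e2 : μ.re = 1 := by nlinarith
    have e3 : μ.im = 0 := by
      have hsq : μ.re ^ 2 + μ.im ^ 2 = 1 := by
        have : ‖μ‖ ^ 2 = 1 := by rw [← hr, e1]; norm_num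
        rw [Complex.sq_norm, Complex.normSq_apply] at this
        nlinarith
      nlinarith
    have hμ : μ = 1 := by
      apply Complex.ext <;> simp [e2, e3]
    rw [hμ] at hroot
    simp at hroot
    have := congrArg Complex.re hroot
    simp [Complex.add_re] at this
    -- this : c + (n+1) = 0 in some form
    nlinarith [this]
  -- conclude
  have h1' : r * r ^ (n+1) ≤ c + (c-1) * r := by
    rw [← pow_succ']; exact h1
  nlinarith [h1', hr1, mul_pos (sub_pos.mpr hr1) (sub_pos.mpr hr1)]
end

section
/- Let c > 1, n > 11, and let μ ∈ ℂ with |μ| > 1 satisfy μ^{n+1} = c/μ − (c−1) (equivalently, c + μ + ⋯ + μ^{n+1} = 0). Then |n + 2 + (c−1)μ^{−n−1}| > n/2. -/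
open Real

/-- For `|φ| ≤ 2`, `cos φ + |sin φ| > 0`. -/
lemma aux_trig {φ : ℝ} (h : |φ| ≤ 2) : 0 < Real.cos φ + |Real.sin φ| := by
  have hx0 : (0:ℝ) ≤ |φ| := abs_nonneg φ
  have hpi : (3:ℝ) < π := Real.pi_gt_three
  have hsin : 0 ≤ Real.sin |φ| :=
    Real.sin_nonneg_of_nonneg_of_le_pi hx0 (by linarith)
  have habs : |Real.sin φ| = Real.sin |φ| := by
    rcases abs_cases φ with ⟨he, hp⟩ | ⟨he, hp⟩
    · rw [he]; rw [he] at hsin; exact abs_of_nonneg hsin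
    · rw [he] at hsin ⊢
      rw [Real.sin_neg] at hsin ⊢
      rw [abs_of_nonpos (by linarith)]
  have hcos : Real.cos φ = Real.cos |φ| := (Real.cos_abs φ).symm
  rw [habs, hcos]
  set x := |φ| with hxdef
  have key : Real.cos x + Real.sin x = Real.sqrt 2 * Real.sin (x + π/4) := by
    rw [Real.sin_add, Real.sin_pi_div_four, Real.cos_pi_div_four]
    have h2 : Real.sqrt 2 * Real.sqrt 2 = 2 := Real.mul_self_sqrt (by norm_num)
    linear_combination (-(Real.sin x + Real.cos x)/2) * h2
  rw [key]
  apply mul_pos (Real.sqrt_pos.2 (by norm_num))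
  apply Real.sin_pos_of_pos_of_lt_pi
  · have := Real.pi_pos; linarith
  · have hx2 : x ≤ 2 := h
    linarith

/-- If `|x| < π/2` then `|x| ≤ |tan x|`. -/
lemma aux_tan {x : ℝ} (h : |x| < π/2) : |x| ≤ |Real.tan x| := by
  rcases lt_trichotomy x 0 with hx | hx | hx
  · have h2 : -x < π/2 := by rw [abs_of_neg hx] at h; exact h
    have ht := Real.lt_tan (by linarith : 0 < -x) h2
    rw [Real.tan_neg] at ht
    rw [abs_of_neg hx]
    calc -x ≤ -Real.tan x := le_of_lt ht
    _ ≤ |Real.tan x| := neg_le_abs _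
  · simp [hx]
  · have h2 : x < π/2 := by rw [abs_of_pos hx] at h; exact h
    have ht := Real.lt_tan hx h2
    rw [abs_of_pos hx]
    exact le_trans (le_of_lt ht) (le_abs_self _)

set_option maxHeartbeats 1000000 in
/-- Let `c > 1`, `n > 11`, and `μ ∈ ℂ` with `|μ| > 1` satisfy `μ^{n+1} = c/μ − (c−1)`.
Then `|n + 2 + (c−1)μ^{−n−1}| > n/2`. -/
theorem stmt4 (n : ℕ) (hn : 11 < n) (c : ℝ) (hc : 1 < c) (μ : ℂ)
    (hμ : 1 < ‖μ‖)
    (heq : μ ^ (n + 1) = (c : ℂ) / μ - ((c : ℂ) - 1)) :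
    (n : ℝ) / 2 < ‖(n : ℂ) + 2 + ((c : ℂ) - 1) * (μ ^ (n + 1))⁻¹‖ := by
  by_contra hcon
  push_neg at hcon
  have hμ0 : μ ≠ 0 := by
    intro h; rw [h] at hμ; simp at hμ; linarith
  have hp1 : μ ^ (n+1) ≠ 0 := pow_ne_zero _ hμ0
  have hp2 : μ ^ (n+2) ≠ 0 := pow_ne_zero _ hμ0
  have hc1 : (0:ℝ) < c - 1 := by linarith
  have hc0 : (0:ℝ) < c := by linarith
  -- μ^{n+2} = c - (c-1)μ
  have hw : μ ^ (n+2) = (c:ℂ) - ((c:ℂ) - 1) * μ := by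
    have h1 : μ ^ (n+1) * μ = ((c:ℂ) / μ - ((c:ℂ) - 1)) * μ := by rw [heq]
    rw [← pow_succ] at h1
    field_simp at h1
    linear_combination h1
  -- rewrite the target quantity
  have hT : (n : ℂ) + 2 + ((c : ℂ) - 1) * (μ ^ (n + 1))⁻¹
      = ((n : ℂ) + 1) + (c : ℂ) * (μ ^ (n+2))⁻¹ := by
    field_simp
    linear_combination (μ ^ (n+1)) * hw
  rw [hT] at hcon
  set w : ℂ := μ ^ (n+2) with hwdef
  have hww : w = (c:ℂ) - ((c:ℂ) - 1) * μ := hw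
  have hN : 0 < Complex.normSq w := Complex.normSq_pos.2 hp2
  have habsw : 0 < ‖w‖ := by
    rw [norm_pos_iff]; exact hp2
  set v : ℂ := (c:ℂ) * w⁻¹ with hv
  -- real/imaginary parts of v
  have hvre : v.re = c * w.re / Complex.normSq w := by
    simp [hv, Complex.mul_re, Complex.inv_re, Complex.inv_im]
    ring
  have hvim : v.im = -(c * w.im) / Complex.normSq w := by
    simp [hv, Complex.mul_im, Complex.inv_re, Complex.inv_im]
    ring
  -- bounds from hcon
  have hre : (((n:ℂ) + 1) + v).re = (n:ℝ) + 1 + v.re := by simp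
  have him : (((n:ℂ) + 1) + v).im = v.im := by simp
  have hA : |(n:ℝ) + 1 + v.re| ≤ (n:ℝ)/2 := by
    rw [← hre]; exact le_trans (Complex.abs_re_le_norm _) hcon
  have hB : |v.im| ≤ (n:ℝ)/2 := by
    rw [← him]; exact le_trans (Complex.abs_im_le_norm _) hcon
  have hvre_le : v.re ≤ -(((n:ℝ) + 2)/2) := by
    have := (abs_le.1 hA).2; linarith
  have hn2 : (0:ℝ) < (n:ℝ) + 2 := by positivity
  -- |v| ≥ (n+2)/2 hence |w| ≤ 2c/(n+2)
  have habsv : ((n:ℝ) + 2)/2 ≤ ‖v‖ := by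
    have h1 : |v.re| ≤ ‖v‖ := Complex.abs_re_le_norm v
    have h2 : ((n:ℝ) + 2)/2 ≤ |v.re| := by
      rw [abs_of_nonpos (by linarith)]; linarith
    linarith
  have habsveq : ‖v‖ = c / ‖w‖ := by
    rw [hv, norm_mul, norm_inv, Complex.norm_real, Real.norm_eq_abs, abs_of_pos hc0, div_eq_mul_inv]
  have habsw_le : ‖w‖ ≤ 2*c/((n:ℝ)+2) := by
    rw [habsveq, le_div_iff₀ habsw] at habsv
    rw [le_div_iff₀ hn2]
    linarith
  -- key sign facts on w
  have e1 : c * w.re ≤ -(((n:ℝ)+2)/2) * Complex.normSq w := by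
    rw [hvre, div_le_iff₀ hN] at hvre_le
    linarith
  have e2 : c * |w.im| ≤ ((n:ℝ)/2) * Complex.normSq w := by
    have : |v.im| = c * |w.im| / Complex.normSq w := by
      rw [hvim, abs_div, abs_of_pos hN, abs_neg, abs_mul, abs_of_pos hc0]
    rw [this, div_le_iff₀ hN] at hB
    linarith
  have hkey1 : w.re + |w.im| ≤ 0 := by
    have h1 : c * (w.re + |w.im|) ≤ -Complex.normSq w := by linarith
    nlinarith [hN, hc0]
  have hwre_np : w.re ≤ 0 := by
    have := abs_nonneg w.im; linarith
  -- real and imaginary parts of μ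
  have hwre : w.re = c - (c-1) * μ.re := by
    rw [hww]; simp [Complex.sub_re, Complex.mul_re]
  have hwim : w.im = -((c-1) * μ.im) := by
    rw [hww]; simp [Complex.sub_im, Complex.mul_im]
  have hμre : c ≤ (c-1) * μ.re := by
    rw [hwre] at hwre_np; linarith
  have hμre_pos : 0 < μ.re := by nlinarith
  have hμim : (c-1) * |μ.im| = |w.im| := by
    rw [hwim, abs_neg, abs_mul, abs_of_pos hc1]
  have hμim_le : (c-1) * |μ.im| ≤ 2*c/((n:ℝ)+2) := by
    rw [hμim]
    exact le_trans (Complex.abs_im_le_norm w) habsw_le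
  -- ratio bound
  have hratio : ((n:ℝ)+2) * |μ.im| ≤ 2 * μ.re := by
    rw [le_div_iff₀ hn2] at hμim_le
    have h2 : (c-1) * (((n:ℝ)+2) * |μ.im|) ≤ (c-1) * (2 * μ.re) := by nlinarith
    exact le_of_mul_le_mul_left h2 hc1
  -- the argument of μ is small
  set θ := Complex.arg μ with hθdef
  have hθhalf : |θ| < π/2 := Complex.abs_arg_lt_pi_div_two_iff.2 (Or.inl hμre_pos)
  have hθ2 : ((n:ℝ)+2) * |θ| ≤ 2 := by
    have h1 : |θ| ≤ |μ.im| / μ.re := by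
      have h2 := aux_tan hθhalf
      rwa [Complex.tan_arg, abs_div, abs_of_pos hμre_pos] at h2
    calc ((n:ℝ)+2) * |θ| ≤ ((n:ℝ)+2) * (|μ.im| / μ.re) := by
          exact mul_le_mul_of_nonneg_left h1 (by linarith)
    _ = (((n:ℝ)+2) * |μ.im|) / μ.re := by ring
    _ ≤ 2 := by rw [div_le_iff₀ hμre_pos]; linarith
  set φ := ((n:ℝ)+2) * θ with hφdef
  have hφ2 : |φ| ≤ 2 := by
    rw [hφdef, abs_mul, abs_of_pos hn2]; exact hθ2
  -- polar form of w
  have hwpolar : w = ((‖μ‖ : ℝ) : ℂ)^(n+2) * Complex.exp ((φ:ℂ) * Complex.I) := by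
    rw [hwdef]
    conv_lhs => rw [← Complex.norm_mul_exp_arg_mul_I μ]
    rw [mul_pow, ← Complex.exp_nat_mul]
    congr 1
    rw [hφdef, hθdef]
    push_cast
    ring
  have hR : 0 < ‖μ‖^(n+2) := pow_pos (by linarith) _
  have hwre3 : w.re = ‖μ‖^(n+2) * Real.cos φ := by
    rw [hwpolar, Complex.exp_mul_I]
    simp [Complex.mul_re, Complex.mul_im, ← Complex.ofReal_cos, ← Complex.ofReal_sin,
      ← Complex.ofReal_pow]
  have hwim3 : w.im = ‖μ‖^(n+2) * Real.sin φ := by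
    rw [hwpolar, Complex.exp_mul_I]
    simp [Complex.mul_re, Complex.mul_im, ← Complex.ofReal_cos, ← Complex.ofReal_sin,
      ← Complex.ofReal_pow]
  -- contradiction
  have hpos := aux_trig hφ2
  have hfinal : 0 < w.re + |w.im| := by
    rw [hwre3, hwim3, abs_mul, abs_of_pos hR]
    nlinarith [hR, hpos]
  linarith
end

section
/- Let μ₁, …, μ_{n+1} be the distinct complex roots of c + μ + ⋯ + μ^{n+1} = 0 with c > 1, and let L_j(μ) = ∏_{k≠j} (μ − μ_k)/(μ_j − μ_k) be the j-th Lagrange interpolation polynomial at these nodes, with coefficients L_{jk} so that L_j(μ) = ∑_{k=1}^{n+1} L_{jk} μ^{k−1}. Then L_{jk} = (μ_j^{n+2−k} − 1)/((n+2)μ_j^{n+1} + c − 1) for all 1 ≤ j, k ≤ n+1. -/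
open Polynomial Finset

private lemma aux_deriv_sum (x : ℂ) (m : ℕ) :
    (x - 1) * ∑ l ∈ Finset.range m, ((l : ℂ) + 1) * x ^ l
      = (m : ℂ) * x ^ m - ∑ l ∈ Finset.range m, x ^ l := by
  induction m with
  | zero => simp
  | succ m ih =>
    rw [Finset.sum_range_succ, Finset.sum_range_succ (f := fun l => x ^ l)]
    push_cast
    linear_combination ih

/-- Let `μ₁, …, μ_{n+1}` be the distinct roots of `c + μ + ⋯ + μ^{n+1} = 0` with `c > 1`,
and let `L_j` be the `j`-th Lagrange basis polynomial at these nodes.  Then the coefficient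
of `μ^{k}` in `L_j` equals `(μ_j^{n+1−k} − 1)/((n+2)μ_j^{n+1} + c − 1)`
(in the paper's 1-based indexing, `L_{jk} = (μ_j^{n+2−k} − 1)/((n+2)μ_j^{n+1} + c − 1)`). -/
theorem stmt5 (n : ℕ) (hn : 1 ≤ n) (c : ℝ) (hc : 1 < c) (μ : Fin (n + 1) → ℂ)
    (hinj : Function.Injective μ)
    (hroot : ∀ j, (c : ℂ) + ∑ l ∈ Finset.range (n + 1), μ j ^ (l + 1) = 0) :
    ∀ j k : Fin (n + 1),
      (Lagrange.basis Finset.univ μ j).coeff (k : ℕ) =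
        (μ j ^ (n + 1 - (k : ℕ)) - 1) / (((n : ℂ) + 2) * μ j ^ (n + 1) + (c : ℂ) - 1) := by
  intro j k
  classical
  set ν := μ j with hνdef
  have hν1 : ν ≠ 1 := by
    intro h
    have h0 := hroot j
    rw [← hνdef, h] at h0
    simp only [one_pow, Finset.sum_const, Finset.card_range, nsmul_eq_mul, mul_one] at h0
    have h1 : (c + (n + 1) : ℝ) = 0 := by exact_mod_cast h0
    have : (0:ℝ) ≤ (n:ℝ) := Nat.cast_nonneg n
    linarith
  set P : Polynomial ℂ := Polynomial.C (c:ℂ) + ∑ l ∈ Finset.range (n+1), Polynomial.X ^ (l+1)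
    with hP
  set N : Polynomial ℂ := ∏ i ∈ Finset.univ.erase j, (Polynomial.X - Polynomial.C (μ i))
    with hN
  -- coefficients of P
  have hPcoeff : ∀ m : ℕ, P.coeff m = if m = 0 then (c:ℂ) else if m ≤ n + 1 then 1 else 0 := by
    intro m
    rw [hP]
    simp only [Polynomial.coeff_add, Polynomial.coeff_C, Polynomial.finset_sum_coeff,
      Polynomial.coeff_X_pow]
    rcases Nat.eq_zero_or_pos m with hm | hm
    · subst hm; simp
    · obtain ⟨m', rfl⟩ := Nat.exists_eq_succ_of_ne_zero hm.ne'
      rw [if_neg (Nat.succ_ne_zero _), if_neg (Nat.succ_ne_zero _), zero_add]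
      have hterm : ∀ l ∈ Finset.range (n+1), (if m' + 1 = l + 1 then (1:ℂ) else 0)
          = if m' = l then (1:ℂ) else 0 := by
        intro l _
        simp [Nat.add_right_cancel_iff]
      rw [Finset.sum_congr rfl hterm, Finset.sum_ite_eq]
      simp [Finset.mem_range, Nat.lt_succ_iff, Nat.succ_le_succ_iff]
  -- N is monic of degree n
  have hNmonic : N.Monic := by
    rw [hN]
    exact Polynomial.monic_prod_of_monic _ _ fun i _ => Polynomial.monic_X_sub_C _
  have hNdeg : N.natDegree = n := by
    rw [hN, Polynomial.natDegree_prod_of_monic _ _ fun i _ => Polynomial.monic_X_sub_C _]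
    simp [Polynomial.natDegree_X_sub_C, Finset.card_erase_of_mem]
  -- P equals the nodal polynomial
  have hPQ : P = ∏ i : Fin (n+1), (Polynomial.X - Polynomial.C (μ i)) := by
    set Q : Polynomial ℂ := ∏ i : Fin (n+1), (Polynomial.X - Polynomial.C (μ i)) with hQ
    have hQmonic : Q.Monic :=
      Polynomial.monic_prod_of_monic _ _ fun i _ => Polynomial.monic_X_sub_C _
    have hQdeg : Q.natDegree = n + 1 := by
      rw [hQ, Polynomial.natDegree_prod_of_monic _ _ fun i _ => Polynomial.monic_X_sub_C _]
      simp [Polynomial.natDegree_X_sub_C]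
    apply Polynomial.eq_of_degree_sub_lt_of_eval_index_eq (v := μ) Finset.univ hinj.injOn
    · rw [Finset.card_univ, Fintype.card_fin]
      rw [Polynomial.degree_lt_iff_coeff_zero]
      intro m hm
      rw [Polynomial.coeff_sub, hPcoeff]
      rcases eq_or_lt_of_le hm with hm' | hm'
      · rw [← hm']
        rw [if_neg (by omega), if_pos (by omega)]
        have : Q.coeff (n+1) = 1 := by
          have := hQmonic.coeff_natDegree
          rwa [hQdeg] at this
        rw [this]; ring
      · rw [if_neg (by omega), if_neg (by omega)]
        have hq0 : Q.coeff m = 0 :=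
          Polynomial.coeff_eq_zero_of_natDegree_lt (by rw [hQdeg]; omega)
        rw [hq0]; ring
    · intro i _
      have hPe : P.eval (μ i) = 0 := by
        rw [hP]
        simpa [Polynomial.eval_finset_sum] using hroot i
      have hQe : Q.eval (μ i) = 0 := by
        rw [hQ, Polynomial.eval_prod]
        exact Finset.prod_eq_zero (Finset.mem_univ i) (by simp)
      rw [hPe, hQe]
  have hfacN : (Polynomial.X - Polynomial.C ν) * N = P := by
    rw [hPQ, hN, hνdef]
    exact Finset.mul_prod_erase Finset.univ
      (fun i => Polynomial.X - Polynomial.C (μ i)) (Finset.mem_univ j)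
  -- coefficient recurrence
  have hrec : ∀ m : ℕ, N.coeff m - ν * N.coeff (m+1) = P.coeff (m+1) := by
    intro m
    rw [← hfacN, sub_mul, Polynomial.coeff_sub, Polynomial.coeff_X_mul,
      Polynomial.coeff_C_mul]
  have hNcoeff : ∀ d : ℕ, d ≤ n → N.coeff (n - d) = ∑ m ∈ Finset.range (d+1), ν ^ m := by
    intro d
    induction d with
    | zero =>
      intro _
      have := hNmonic.coeff_natDegree
      rw [hNdeg] at this
      simpa using this
    | succ d ih =>
      intro hd
      have hd' : d ≤ n := by omega
      have h1 : n - (d+1) + 1 = n - d := by omega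
      have hr := hrec (n - (d+1))
      rw [h1, ih hd', hPcoeff, if_neg (by omega), if_pos (by omega)] at hr
      rw [geom_sum_succ]
      linear_combination hr
  -- evaluation facts
  have hNeval : N.eval ν = ∏ i ∈ Finset.univ.erase j, (ν - μ i) := by
    rw [hN, Polynomial.eval_prod]
    simp
  have hp0 : N.eval ν ≠ 0 := by
    rw [hNeval]
    apply Finset.prod_ne_zero_iff.mpr
    intro i hi
    rw [sub_ne_zero, hνdef]
    intro h
    exact (Finset.mem_erase.mp hi).1 (hinj h.symm)
  have hderiv : (Polynomial.derivative P).eval ν = N.eval ν := by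
    rw [← hfacN, Polynomial.derivative_mul]
    simp
  have hderiv2 : (Polynomial.derivative P).eval ν
      = ∑ l ∈ Finset.range (n+1), ((l:ℂ)+1) * ν ^ l := by
    rw [hP]
    simp [Polynomial.derivative_sum, Polynomial.derivative_X_pow, Polynomial.eval_finset_sum]
  have hDp : ((n:ℂ)+2) * ν^(n+1) + (c:ℂ) - 1 = (ν - 1) * N.eval ν := by
    rw [← hderiv, hderiv2, aux_deriv_sum]
    have hgeom := geom_sum_mul ν (n+1)
    have hc' : (c:ℂ) + ν * ∑ l ∈ Finset.range (n+1), ν ^ l = 0 := by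
      have h0 := hroot j
      rw [← hνdef] at h0
      rw [Finset.mul_sum]
      convert h0 using 2
      apply Finset.sum_congr rfl
      intro l _
      ring
    push_cast
    linear_combination hc' - hgeom
  have hD0 : ((n:ℂ)+2) * ν^(n+1) + (c:ℂ) - 1 ≠ 0 := by
    rw [hDp]
    exact mul_ne_zero (sub_ne_zero.mpr hν1) hp0
  -- the Lagrange basis polynomial
  have hbasis : Lagrange.basis Finset.univ μ j = Polynomial.C ((N.eval ν)⁻¹) * N := by
    rw [Lagrange.basis, hN, hNeval]
    simp_rw [Lagrange.basisDivisor]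
    rw [Finset.prod_mul_distrib, ← map_prod, Finset.prod_inv_distrib, ← hνdef]
  -- finish
  have hk : (k:ℕ) ≤ n := Nat.lt_succ_iff.mp k.isLt
  have h2 : n + 1 - (k:ℕ) = (n - (k:ℕ)) + 1 := by omega
  have hcoefk : N.coeff (k:ℕ) = ∑ m ∈ Finset.range (n - (k:ℕ) + 1), ν ^ m := by
    have h3 := hNcoeff (n - (k:ℕ)) (by omega)
    rwa [show n - (n - (k:ℕ)) = (k:ℕ) by omega] at h3
  rw [hbasis, Polynomial.coeff_C_mul, h2, hcoefk]
  rw [eq_div_iff hD0, hDp]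
  have hg := geom_sum_mul ν (n - (k:ℕ) + 1)
  calc (Polynomial.eval ν N)⁻¹ * (∑ m ∈ Finset.range (n - (k:ℕ) + 1), ν ^ m)
        * ((ν - 1) * Polynomial.eval ν N)
      = (∑ m ∈ Finset.range (n - (k:ℕ) + 1), ν ^ m) * (ν - 1)
        * ((Polynomial.eval ν N)⁻¹ * Polynomial.eval ν N) := by ring
    _ = (∑ m ∈ Finset.range (n - (k:ℕ) + 1), ν ^ m) * (ν - 1) := by
        rw [inv_mul_cancel₀ hp0, mul_one]
    _ = ν ^ (n - (k:ℕ) + 1) - 1 := hg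
end

section
/- Under the hypotheses c > 1 and n > 11, the Lagrange coefficients L_{jk} = (μ_j^{1−k} − μ_j^{−n−1})/(n + 2 + (c−1)μ_j^{−n−1}) of the interpolation at the roots μ₁, …, μ_{n+1} of c + μ + ⋯ + μ^{n+1} = 0 satisfy |L_{jk}| < 4/n for all 1 ≤ j, k ≤ n+1. -/
open Polynomial Finset
set_option maxHeartbeats 1000000

lemma aux_root {n : ℕ} {c : ℝ} {z : ℂ}
    (h : (c : ℂ) + ∑ l ∈ Finset.range (n + 1), z ^ (l + 1) = 0) :
    z ^ (n + 2) = (c : ℂ) - ((c : ℂ) - 1) * z := by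
  have hs : ∑ l ∈ Finset.range (n + 1), z ^ (l + 1) = (∑ l ∈ Finset.range (n+1), z ^ l) * z := by
    rw [Finset.sum_mul]
    exact Finset.sum_congr rfl fun l _ => (pow_succ z l).symm
  have hg := geom_sum_mul z (n + 1)
  have h1 : (∑ l ∈ Finset.range (n+1), z ^ l) * z = -(c : ℂ) := by
    rw [← hs]; linear_combination h
  have : (z ^ (n+1) - 1) * z = -(c:ℂ) * (z - 1) := by
    rw [← hg]; linear_combination (z - 1) * h1 - z * hg + z * hg
  linear_combination this

lemma aux_ne_one {n : ℕ} {c : ℝ} {z : ℂ} (hc : 1 < c)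
    (h : (c : ℂ) + ∑ l ∈ Finset.range (n + 1), z ^ (l + 1) = 0) : z ≠ 1 := by
  rintro rfl
  simp only [one_pow, Finset.sum_const, Finset.card_range, nsmul_eq_mul, mul_one] at h
  have := congrArg Complex.re h
  simp at this
  have : (c : ℝ) + (n + 1) = 0 := by
    simpa using this
  have hn : (0:ℝ) ≤ (n:ℝ) := Nat.cast_nonneg n
  linarith

lemma aux_abs_gt_one {n : ℕ} {c : ℝ} {z : ℂ} (hc : 1 < c)
    (hz : z ^ (n + 2) = (c : ℂ) - ((c : ℂ) - 1) * z) (hne : z ≠ 1) :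
    1 < ‖z‖ := by
  by_contra hr
  push_neg at hr
  set x := z.re with hx
  set y := z.im with hy
  have hnormsq : (Complex.normSq z) ^ (n + 2) = (c - (c-1)*x)^2 + ((c-1)*y)^2 := by
    have := congrArg Complex.normSq hz
    rw [map_pow] at this
    rw [this]
    simp [Complex.normSq_apply, Complex.sub_re, Complex.sub_im, Complex.mul_re, Complex.mul_im,
      Complex.ofReal_re, Complex.ofReal_im]
    ring
  have hsq : Complex.normSq z ≤ 1 := by
    have := Complex.sq_norm z
    nlinarith [norm_nonneg z]
  have hle1 : (Complex.normSq z) ^ (n + 2) ≤ 1 :=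
    pow_le_one₀ (Complex.normSq_nonneg z) hsq
  have hxle : x ≤ 1 := by
    have h1 : x ^ 2 ≤ Complex.normSq z := by
      simp [Complex.normSq_apply]; nlinarith [sq_nonneg y]
    nlinarith
  have haux : 1 ≤ c - (c-1)*x := by nlinarith
  have hy2 : ((c-1)*y)^2 ≤ 0 := by nlinarith
  have hy0 : y = 0 := by
    have h3 : (c-1)*y = 0 := by nlinarith [sq_nonneg ((c-1)*y)]
    rcases mul_eq_zero.mp h3 with h | h
    · linarith
    · exact h
  have hx1 : x = 1 := by
    have h4 : (c - (c-1)*x)^2 ≤ 1 := by nlinarith [sq_nonneg ((c-1)*y)]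
    have h5 : c - (c-1)*x = 1 := by nlinarith
    have : (c-1)*(1-x) = 0 := by linarith
    rcases mul_eq_zero.mp this with h | h
    · linarith
    · linarith
  exact hne (Complex.ext hx1 hy0)


lemma aux_real {N c u v : ℝ} (hN : 12 ≤ N) (hc : 1 < c)
    (hsq : (c - (N + 1) * u) ^ 2 + ((N + 1) * v) ^ 2 ≤ (N / 2) ^ 2 * (u ^ 2 + v ^ 2)) :
    0 < u ∧ (N + 2) * |v| ≤ 6 / 5 * (u + c) := by
  have hu0 : 0 < u := by
    by_contra h
    push_neg at h
    have f1 : 0 < c - (N + 1) * u + N / 2 * u := by nlinarith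
    have f2 : 0 < c - (N + 1) * u - N / 2 * u := by nlinarith
    nlinarith [mul_pos f1 f2, sq_nonneg v]
  have hB : (N + 2) * u ≤ 2 * c := by
    by_contra h
    push_neg at h
    have f1 : 0 < (N / 2 + 1) * u - c := by nlinarith
    have f2 : 0 < (3 * N / 2 + 1) * u - c := by nlinarith
    nlinarith [mul_pos f1 f2, sq_nonneg v]
  have hC : 3 * v ^ 2 ≤ u ^ 2 := by
    nlinarith [hsq, sq_nonneg (c - (N + 1) * u), sq_nonneg v,
      mul_nonneg (sq_nonneg v) (by linarith : (0:ℝ) ≤ N)]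
  have hvu : |v| ≤ 3 / 5 * u := by
    nlinarith [hC, sq_abs v, abs_nonneg v, hu0]
  refine ⟨hu0, ?_⟩
  have h7 : (N + 4) * u ≤ 2 * (u + c) := by nlinarith
  have e1 : (N + 2) * |v| ≤ (N + 4) * |v| := by nlinarith [abs_nonneg v]
  have e2 : (N + 4) * |v| ≤ (N + 4) * (3 / 5 * u) :=
    mul_le_mul_of_nonneg_left hvu (by linarith)
  have e3 : (N + 4) * (3 / 5 * u) ≤ 6 / 5 * (u + c) := by nlinarith [h7]
  linarith


lemma aux_denom {n : ℕ} {c : ℝ} {z : ℂ} (hn : 11 < n) (hc : 1 < c)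
    (hz : z ^ (n + 2) = (c : ℂ) - ((c : ℂ) - 1) * z) (hr : 1 < ‖z‖) :
    ((n : ℝ) / 2) * (‖z‖) ^ (n + 1)
      < ‖((n : ℂ) + 2) * z ^ (n + 1) + ((c : ℂ) - 1)‖ := by
  set N : ℝ := (n : ℝ) with hN
  have hN12 : (12 : ℝ) ≤ N := by
    have h12 : (12 : ℕ) ≤ n := hn
    rw [hN]; exact_mod_cast h12
  set r := ‖z‖ with hrdef
  have hr0 : 0 < r := by linarith
  by_contra hcon
  push_neg at hcon
  set w : ℂ := ((c : ℂ) - 1) * z - (c : ℂ) with hw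
  have h1 : z ^ (n + 2) = -w := by rw [hw]; linear_combination hz
  have h2 : ‖w‖ = r ^ (n + 2) := by
    have hwz : w = -(z ^ (n+2)) := by linear_combination h1
    rw [hwz, norm_neg, norm_pow]
  have h3 : (((n : ℂ) + 2) * z ^ (n + 1) + ((c : ℂ) - 1)) * z
      = (c : ℂ) - ((n : ℂ) + 1) * w := by
    rw [hw]
    linear_combination ((n:ℂ)+2) * hz
  set u := w.re with hu
  set v := w.im with hv
  have hre1 : ((c : ℂ) - ((n : ℂ) + 1) * w).re = c - (N + 1) * u := by
    simp [Complex.sub_re, Complex.mul_re, Complex.add_re, hN, hu]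
  have him1 : ((c : ℂ) - ((n : ℂ) + 1) * w).im = -((N + 1) * v) := by
    simp [Complex.sub_im, Complex.mul_im, Complex.add_im, hN, hv]
  have habs1 : ‖(c : ℂ) - ((n : ℂ) + 1) * w‖ ≤ N / 2 * ‖w‖ := by
    rw [← h3, norm_mul]
    calc ‖(↑n + 2) * z ^ (n + 1) + (↑c - 1)‖ * ‖z‖
        ≤ (N / 2 * r ^ (n + 1)) * r := by
          apply mul_le_mul_of_nonneg_right hcon hr0.le
      _ = N / 2 * r ^ (n + 2) := by ring
      _ = N / 2 * ‖w‖ := by rw [h2]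
  have hsq : (c - (N + 1) * u) ^ 2 + ((N + 1) * v) ^ 2 ≤ (N / 2) ^ 2 * (u ^ 2 + v ^ 2) := by
    have h5 : (‖(c : ℂ) - ((n : ℂ) + 1) * w‖) ^ 2
        ≤ (N / 2 * ‖w‖) ^ 2 :=
      pow_le_pow_left₀ (norm_nonneg _) habs1 2
    rw [mul_pow, Complex.sq_norm, Complex.sq_norm, Complex.normSq_apply, Complex.normSq_apply,
      hre1, him1] at h5
    nlinarith [h5]
  obtain ⟨hu0, hkey⟩ := aux_real hN12 hc hsq
  -- coordinates of z
  set x := z.re with hxd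
  set y := z.im with hyd
  have hux : u = (c - 1) * x - c := by
    rw [hu, hw]; simp [Complex.sub_re, Complex.mul_re, hxd]
  have hvy : v = (c - 1) * y := by
    rw [hv, hw]; simp [Complex.sub_im, Complex.mul_im, hyd]
  have hc1 : (0:ℝ) < c - 1 := by linarith
  have hcx : (c - 1) * x = u + c := by rw [hux]; ring
  have hx0 : 0 < x := by
    by_contra h
    push_neg at h
    have : (c - 1) * x ≤ 0 := mul_nonpos_of_nonneg_of_nonpos (by linarith) h
    linarith
  -- argument estimates
  set θ := Complex.arg z with hθd
  have hpolar : z = (r : ℂ) * Complex.exp (θ * Complex.I) :=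
    (Complex.norm_mul_exp_arg_mul_I z).symm
  have htan : Real.tan θ = y / x := Complex.tan_arg z
  have harg : |θ| < Real.pi / 2 := Complex.abs_arg_lt_pi_div_two_iff.mpr (Or.inl hx0)
  clear_value N r w u v x y θ
  have hθabs : |θ| ≤ |y| / x := by
    rcases le_or_gt 0 θ with h | h
    · have h1' : θ ≤ Real.tan θ := Real.le_tan h (lt_of_abs_lt harg)
      rw [abs_of_nonneg h]
      calc θ ≤ y / x := by rw [← htan]; exact h1'
        _ ≤ |y| / x := by
          gcongr
          exact le_abs_self y
    · have hn0 : 0 ≤ -θ := by linarith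
      have hn1 : -θ < Real.pi / 2 := by
        have := neg_lt_of_abs_lt harg; linarith
      have h1' : -θ ≤ Real.tan (-θ) := Real.le_tan hn0 hn1
      rw [Real.tan_neg, htan] at h1'
      rw [abs_of_neg h]
      calc -θ ≤ -(y / x) := h1'
        _ = (-y) / x := by ring
        _ ≤ |y| / x := by
          gcongr
          exact neg_le_abs y
  have hvabs : |v| = (c - 1) * |y| := by
    rw [hvy, abs_mul, abs_of_pos hc1]
  have h9 : (N + 2) * ((c - 1) * |y|) ≤ 6 / 5 * ((c - 1) * x) := by
    rw [← hvabs, hcx]; exact hkey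
  have h10 : (N + 2) * |y| ≤ 6 / 5 * x := by nlinarith [h9, hc1]
  have h11 : (N + 2) * |θ| ≤ 6 / 5 := by
    calc (N + 2) * |θ| ≤ (N + 2) * (|y| / x) := by
          apply mul_le_mul_of_nonneg_left hθabs (by linarith)
      _ = ((N + 2) * |y|) / x := by ring
      _ ≤ (6 / 5 * x) / x := by
          gcongr
      _ = 6 / 5 := by field_simp
  have hπ : (6:ℝ) / 5 < Real.pi / 2 := by
    have := Real.pi_gt_three; linarith
  have hcos : 0 < Real.cos ((N + 2) * θ) := by
    apply Real.cos_pos_of_mem_Ioo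
    constructor
    · have : |( N + 2) * θ| ≤ 6/5 := by
        rw [abs_mul, abs_of_pos (by linarith : (0:ℝ) < N + 2)]; exact h11
      have := abs_le.mp this; linarith
    · have : |( N + 2) * θ| ≤ 6/5 := by
        rw [abs_mul, abs_of_pos (by linarith : (0:ℝ) < N + 2)]; exact h11
      have := abs_le.mp this; linarith
  have hzpow : z ^ (n + 2)
      = ((r : ℂ)) ^ (n + 2) * Complex.exp ((((N + 2) * θ : ℝ) : ℂ) * Complex.I) := by
    rw [hpolar, mul_pow, ← Complex.exp_nat_mul]
    congr 1
    push_cast [hN]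
    ring
  have hre2 : (z ^ (n + 2)).re = r ^ (n + 2) * Real.cos ((N + 2) * θ) := by
    have key : ∀ (a ψ : ℝ), ((a : ℂ) * Complex.exp ((ψ : ℂ) * Complex.I)).re
        = a * Real.cos ψ := by
      intro a ψ
      rw [Complex.exp_mul_I]
      simp only [Complex.mul_re, Complex.add_re, Complex.add_im, Complex.mul_im,
        Complex.ofReal_re, Complex.ofReal_im, Complex.I_re, Complex.I_im,
        Complex.cos_ofReal_re, Complex.cos_ofReal_im, Complex.sin_ofReal_re,
        Complex.sin_ofReal_im]
      ring
    rw [hzpow, ← Complex.ofReal_pow]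
    exact key _ _
  have hpos2 : 0 < (z ^ (n + 2)).re := by
    rw [hre2]; exact mul_pos (pow_pos hr0 _) hcos
  have hneg2 : (z ^ (n + 2)).re = -u := by
    rw [h1]; simp [hu]
  linarith

variable {n : ℕ} {c : ℝ} {μ : Fin (n+1) → ℂ}

noncomputable def Pc (n : ℕ) (c : ℝ) : ℂ[X] := C (c:ℂ) + ∑ l ∈ Finset.range (n+1), X^(l+1)

lemma Pc_coeff_succ (j : ℕ) (hj : j ≤ n) : (Pc n c).coeff (j+1) = 1 := by
  unfold Pc
  rw [coeff_add, coeff_C, finset_sum_coeff]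
  simp only [coeff_X_pow]
  have : ∀ x, (j + 1 = x + 1) = (j = x) := by intro x; simp
  simp only [this]
  rw [Finset.sum_ite_eq (Finset.range (n+1)) j (fun _ => (1:ℂ))]
  simp [Nat.lt_succ_iff, hj]

lemma Pc_natDegree : (Pc n c).natDegree = n + 1 := by
  apply le_antisymm
  · unfold Pc
    apply le_trans (natDegree_add_le _ _)
    simp only [natDegree_C, max_le_iff]
    constructor
    · omega
    · apply le_trans (natDegree_sum_le _ _)
      simp only [Finset.fold_max_le]
      constructor
      · omega
      · intro l hl
        simp only [Function.comp]
        rw [natDegree_X_pow]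
        simp at hl; omega
  · apply le_natDegree_of_ne_zero
    rw [Pc_coeff_succ n (le_refl n)]
    exact one_ne_zero

lemma Pc_monic : (Pc n c).Monic := by
  unfold Monic leadingCoeff
  rw [Pc_natDegree, Pc_coeff_succ n (le_refl n)]

lemma Pc_eq_prod (hinj : Function.Injective μ)
    (hroot : ∀ j, (c : ℂ) + ∑ l ∈ Finset.range (n + 1), μ j ^ (l + 1) = 0) :
    Pc n c = ∏ i : Fin (n+1), (X - C (μ i)) := by
  have hdvd : (∏ i : Fin (n+1), (X - C (μ i))) ∣ Pc n c := by
    apply Finset.prod_dvd_of_coprime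
    · intro i _ j hj hij
      exact Polynomial.pairwise_coprime_X_sub_C hinj hij
    · intro i _
      rw [dvd_iff_isRoot]
      unfold Pc
      have := hroot i
      simp only [IsRoot, eval_add, eval_C, eval_finset_sum, eval_pow, eval_X]
      exact this
  have hQmonic : (∏ i : Fin (n+1), (X - C (μ i))).Monic :=
    monic_prod_of_monic _ _ (fun i _ => monic_X_sub_C _)
  have hQdeg : (∏ i : Fin (n+1), (X - C (μ i))).natDegree = n + 1 := by
    rw [natDegree_prod _ _ (fun i _ => X_sub_C_ne_zero (μ i))]
    simp [natDegree_X_sub_C]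
  exact Polynomial.eq_of_monic_of_dvd_of_natDegree_le hQmonic Pc_monic hdvd
    (by rw [Pc_natDegree, hQdeg])

lemma Nj_coeff (hinj : Function.Injective μ)
    (hroot : ∀ j, (c : ℂ) + ∑ l ∈ Finset.range (n + 1), μ j ^ (l + 1) = 0)
    (j : Fin (n+1)) :
    ∀ m : ℕ, m ≤ n →
      (∏ i ∈ Finset.univ.erase j, (X - C (μ i))).coeff (n - m)
        = ∑ i ∈ Finset.range (m + 1), (μ j) ^ i := by
  set Nj := ∏ i ∈ Finset.univ.erase j, (X - C (μ i)) with hNj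
  have hmul : Pc n c = (X - C (μ j)) * Nj := by
    rw [Pc_eq_prod hinj hroot, hNj]
    exact (Finset.mul_prod_erase Finset.univ (fun i => X - C (μ i)) (Finset.mem_univ j)).symm
  have hNmonic : Nj.Monic := monic_prod_of_monic _ _ (fun i _ => monic_X_sub_C _)
  have hNdeg : Nj.natDegree = n := by
    rw [hNj, natDegree_prod _ _ (fun i _ => X_sub_C_ne_zero (μ i))]
    simp only [natDegree_X_sub_C, Finset.sum_const, smul_eq_mul, mul_one]
    rw [Finset.card_erase_of_mem (Finset.mem_univ j)]
    simp
  have hrec : ∀ m : ℕ, (Pc n c).coeff (m + 1) = Nj.coeff m - μ j * Nj.coeff (m + 1) := by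
    intro m
    rw [hmul, sub_mul, coeff_sub, coeff_X_mul, coeff_C_mul]
  intro m
  induction m with
  | zero =>
    intro _
    simp only [Nat.sub_zero]
    rw [show Nj.coeff n = 1 by rw [← hNdeg]; exact hNmonic.coeff_natDegree]
    simp
  | succ m ih =>
    intro hm
    have hm' : m ≤ n := by omega
    have h1 : (Pc n c).coeff ((n - (m + 1)) + 1) = 1 := Pc_coeff_succ _ (by omega)
    have h2 : (n - (m + 1)) + 1 = n - m := by omega
    rw [h2] at h1
    have h3 := hrec (n - (m + 1))
    rw [h2, h1, ih hm'] at h3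
    have : Nj.coeff (n - (m + 1)) = 1 + μ j * ∑ i ∈ Finset.range (m + 1), (μ j) ^ i := by
      linear_combination -h3
    rw [this]
    conv_rhs => rw [geom_sum_succ]
    ring

lemma deriv_eval (hinj : Function.Injective μ)
    (hroot : ∀ j, (c : ℂ) + ∑ l ∈ Finset.range (n + 1), μ j ^ (l + 1) = 0)
    (j : Fin (n+1)) :
    (μ j - 1) * (∏ i ∈ Finset.univ.erase j, (μ j - μ i))
      = ((n : ℂ) + 2) * (μ j) ^ (n + 1) + ((c : ℂ) - 1) := by
  set q := μ j with hq
  set Nj := ∏ i ∈ Finset.univ.erase j, (X - C (μ i)) with hNj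
  have hmul : Pc n c = (X - C q) * Nj := by
    rw [Pc_eq_prod hinj hroot, hNj, hq]
    exact (Finset.mul_prod_erase Finset.univ (fun i => X - C (μ i)) (Finset.mem_univ j)).symm
  have heval : (∏ i ∈ Finset.univ.erase j, (q - μ i)) = Nj.eval q := by
    rw [hNj, eval_prod]
    exact Finset.prod_congr rfl (fun i _ => by simp)
  have hder : (derivative (Pc n c)).eval q = Nj.eval q := by
    rw [hmul, derivative_mul]
    simp
  have hderval : (derivative (Pc n c)).eval q
      = ∑ l ∈ Finset.range (n + 1), ((l : ℂ) + 1) * q ^ l := by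
    unfold Pc
    rw [derivative_add, derivative_C, derivative_sum]
    simp only [derivative_X_pow]
    rw [zero_add, eval_finset_sum]
    apply Finset.sum_congr rfl
    intro l _
    simp only [eval_mul, eval_C, eval_pow, eval_X, Nat.add_sub_cancel]
    push_cast
    ring
  have htel : ∑ l ∈ Finset.range (n + 1),
      ((((l+1 : ℕ) : ℂ) + 1) * q ^ (l+1) - (((l : ℕ) : ℂ) + 1) * q ^ l)
      = (((n+1 : ℕ) : ℂ) + 1) * q ^ (n+1) - (((0:ℕ) : ℂ) + 1) * q ^ 0 :=
    Finset.sum_range_sub (fun l => (((l : ℕ) : ℂ) + 1) * q ^ l) (n+1)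
  have hsum : ∑ l ∈ Finset.range (n + 1), q ^ (l + 1) = -(c : ℂ) := by
    have := hroot j
    rw [← hq] at this
    linear_combination this
  have hexp : (q - 1) * ∑ l ∈ Finset.range (n + 1), ((l : ℂ) + 1) * q ^ l
      = ((n : ℂ) + 2) * q ^ (n + 1) + ((c : ℂ) - 1) := by
    have expand : (q - 1) * ∑ l ∈ Finset.range (n + 1), ((l : ℂ) + 1) * q ^ l
        = (∑ l ∈ Finset.range (n + 1),
            ((((l+1 : ℕ) : ℂ) + 1) * q ^ (l+1) - (((l : ℕ) : ℂ) + 1) * q ^ l))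
          - ∑ l ∈ Finset.range (n + 1), q ^ (l + 1) := by
      rw [Finset.mul_sum, ← Finset.sum_sub_distrib]
      apply Finset.sum_congr rfl
      intro l _
      push_cast
      ring
    rw [expand, htel, hsum]
    push_cast
    ring
  rw [heval, ← hder, hderval, hexp]

set_option maxHeartbeats 1000000 in
/-- For `c > 1` and `n > 11`, the Lagrange coefficients of interpolation at the roots
`μ₁, …, μ_{n+1}` of `c + μ + ⋯ + μ^{n+1} = 0` satisfy `|L_{jk}| < 4/n`. -/
theorem stmt6 (n : ℕ) (hn : 11 < n) (c : ℝ) (hc : 1 < c) (μ : Fin (n + 1) → ℂ)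
    (hinj : Function.Injective μ)
    (hroot : ∀ j, (c : ℂ) + ∑ l ∈ Finset.range (n + 1), μ j ^ (l + 1) = 0) :
    ∀ j k : Fin (n + 1),
      ‖(Lagrange.basis Finset.univ μ j).coeff (k : ℕ)‖ < 4 / (n : ℝ) := by
  intro j k
  have hn0 : (0:ℝ) < (n:ℝ) := by
    have : 0 < n := by omega
    exact_mod_cast this
  have hq2 := aux_root (hroot j)
  have hne1 : μ j ≠ 1 := aux_ne_one hc (hroot j)
  have hr : 1 < ‖μ j‖ := aux_abs_gt_one hc hq2 hne1
  have hD := aux_denom hn hc hq2 hr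
  set q := μ j with hqd
  set r := ‖q‖ with hrd
  set D := ((n:ℂ) + 2) * q ^ (n+1) + ((c:ℂ) - 1) with hDd
  set d := ∏ i ∈ Finset.univ.erase j, (q - μ i) with hdd
  have hdD : (q - 1) * d = D := deriv_eval hinj hroot j
  have hd0 : d ≠ 0 := by
    rw [hdd]
    apply Finset.prod_ne_zero_iff.mpr
    intro i hi
    exact sub_ne_zero_of_ne fun h => (Finset.mem_erase.mp hi).1 (hinj h).symm
  have hk : (k:ℕ) ≤ n := Fin.is_le k
  set m := n + 1 - (k:ℕ) with hmd
  have hm1 : 1 ≤ m := by omega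
  have hm2 : m ≤ n + 1 := by omega
  have hbasis : (Lagrange.basis Finset.univ μ j).coeff (k:ℕ)
      = d⁻¹ * ((∏ i ∈ Finset.univ.erase j, (X - C (μ i))).coeff (k:ℕ)) := by
    rw [Lagrange.basis]
    unfold Lagrange.basisDivisor
    rw [Finset.prod_mul_distrib, ← map_prod, ← Finset.prod_inv_distrib, coeff_C_mul]
  have hcoeff : (∏ i ∈ Finset.univ.erase j, (X - C (μ i))).coeff (k:ℕ)
      = ∑ i ∈ Finset.range m, q ^ i := by
    have h := Nj_coeff hinj hroot j (n - (k:ℕ)) (by omega)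
    rw [show n - (n - (k:ℕ)) = (k:ℕ) by omega, show (n - (k:ℕ)) + 1 = m by omega] at h
    exact h
  set L := (Lagrange.basis Finset.univ μ j).coeff (k:ℕ) with hLd
  have hLD : L * D = q ^ m - 1 := by
    rw [hbasis, hcoeff, ← hdD]
    have hgs := geom_sum_mul q m
    calc d⁻¹ * (∑ i ∈ Finset.range m, q ^ i) * ((q - 1) * d)
        = (∑ i ∈ Finset.range m, q ^ i) * (q - 1) * (d⁻¹ * d) := by ring
      _ = q ^ m - 1 := by rw [inv_mul_cancel₀ hd0, mul_one, hgs]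
  have habs : ‖L‖ * ‖D‖ = ‖q ^ m - 1‖ := by
    rw [← norm_mul, hLD]
  have hnum : ‖q ^ m - 1‖ ≤ r ^ (n+1) + 1 := by
    calc ‖q ^ m - 1‖ ≤ ‖q ^ m‖ + ‖(-1 : ℂ)‖ := by
          rw [sub_eq_add_neg]; exact norm_add_le _ _
      _ = r ^ m + 1 := by rw [norm_pow]; simp [hrd]
      _ ≤ r ^ (n+1) + 1 := by
          have := pow_le_pow_right₀ (le_of_lt hr) hm2
          linarith
  have hr1 : 1 < r ^ (n+1) := one_lt_pow₀ hr (Nat.succ_ne_zero n)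
  have hR0 : (0:ℝ) < r ^ (n+1) := by positivity
  have hD0 : 0 < ‖D‖ := lt_of_le_of_lt (by positivity) hD
  rcases eq_or_lt_of_le (norm_nonneg L) with hL0 | hL0
  · rw [← hL0]
    positivity
  · have key : ‖L‖ * (((n:ℝ)/2) * r ^ (n+1)) < ‖L‖ * ‖D‖ :=
      mul_lt_mul_of_pos_left hD hL0
    rw [habs] at key
    have key2 : ‖L‖ * (((n:ℝ)/2) * r ^ (n+1)) < 2 * r ^ (n+1) := by
      calc ‖L‖ * (((n:ℝ)/2) * r ^ (n+1)) < ‖q ^ m - 1‖ := key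
        _ ≤ r ^ (n+1) + 1 := hnum
        _ < 2 * r ^ (n+1) := by linarith
    have key3 : ‖L‖ * ((n:ℝ)/2) < 2 := by nlinarith [key2, hR0]
    rw [lt_div_iff₀ hn0]
    nlinarith [key3]
end

section
/- Let μ₁, …, μ_{n+1} be the distinct roots of c + μ + ⋯ + μ^{n+1} = 0 (c > 1) and let V be the (n+1)×(n+1) matrix with entries V_{1k} = (μ_k − 1)/τ and V_{jk} = μ_k^j − μ_k for 2 ≤ j ≤ n+1, where τ > 0. Then with W = V^{−1}, the column sums of W satisfy ∑_{j=1}^{n+1} W_{jk} = −1/(n+c+1) for every k > 1, and ∑_{j=1}^{n+1} W_{j1} = −(n+1)τ/(n+c+1). -/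
/-- Column sums of `W = V⁻¹`, where `V` is the eigenvector matrix with
`V_{1k} = (μ_k − 1)/τ` and `V_{jk} = μ_k^j − μ_k` for `2 ≤ j ≤ n+1`, built from the
distinct roots `μ₁, …, μ_{n+1}` of `c + μ + ⋯ + μ^{n+1} = 0` (`c > 1`):
`∑_j W_{jk} = −1/(n+c+1)` for `k > 1`, and `∑_j W_{j1} = −(n+1)τ/(n+c+1)`. -/
theorem stmt7 (n : ℕ) (hn : 1 ≤ n) (c τ : ℝ) (hc : 1 < c) (hτ : 0 < τ)
    (μ : Fin (n + 1) → ℂ) (hinj : Function.Injective μ)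
    (hroot : ∀ k, (c : ℂ) + ∑ l ∈ Finset.range (n + 1), μ k ^ (l + 1) = 0)
    (V : Matrix (Fin (n + 1)) (Fin (n + 1)) ℂ)
    (hV : ∀ i k, V i k =
      if (i : ℕ) = 0 then (μ k - 1) / (τ : ℂ) else μ k ^ ((i : ℕ) + 1) - μ k) :
    (∀ k : Fin (n + 1), (k : ℕ) ≠ 0 →
        ∑ j, V⁻¹ j k = -1 / ((n : ℂ) + (c : ℂ) + 1)) ∧
      ∑ j, V⁻¹ j 0 = -((n : ℂ) + 1) * (τ : ℂ) / ((n : ℂ) + (c : ℂ) + 1) := by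
  set K : ℂ := (n : ℂ) + (c : ℂ) + 1 with hKdef
  have hK : K ≠ 0 := by
    have : K = (((n : ℝ) + c + 1 : ℝ) : ℂ) := by push_cast [hKdef]; ring
    rw [this, Complex.ofReal_ne_zero]
    positivity
  have hτ' : (τ : ℂ) ≠ 0 := Complex.ofReal_ne_zero.mpr hτ.ne'
  -- no root equals 1
  have hμ1 : ∀ k, μ k ≠ 1 := by
    intro k hk
    have h := hroot k
    rw [hk] at h
    simp only [one_pow, Finset.sum_const, Finset.card_range, nsmul_eq_mul, mul_one] at h
    have h' : (c + ((n : ℝ) + 1) : ℝ) = 0 := by exact_mod_cast h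
    have hn' : (0:ℝ) < c + ((n:ℝ)+1) := by positivity
    linarith
  -- the root sum identity
  have hsum : ∀ k, ∑ l ∈ Finset.range n, μ k ^ (l + 2) = -(c : ℂ) - μ k := by
    intro k
    have h := hroot k
    rw [Finset.sum_range_succ'] at h
    simp only [zero_add, pow_one] at h
    have e : ∑ l ∈ Finset.range n, μ k ^ (l + 2) = ∑ l ∈ Finset.range n, μ k ^ (l + 1 + 1) := by
      apply Finset.sum_congr rfl; intro l _; ring_nf
    rw [e]; linear_combination h
  -- the candidate row vector of column sums
  set x : Fin (n + 1) → ℂ := fun j => if (j : ℕ) = 0 then -((n : ℂ) + 1) * τ / K else -1 / K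
    with hxdef
  -- x is a left eigen-row: x ᵥ* V = 1
  have hx : Matrix.vecMul x V = fun _ => 1 := by
    funext m
    have hrw : Matrix.vecMul x V m = ∑ j, x j * V j m := by
      simp [Matrix.vecMul, dotProduct]
    rw [hrw, Fin.sum_univ_succ]
    have e2 : ∀ i : Fin n, x i.succ * V i.succ m = (-1/K) * (μ m ^ ((i:ℕ) + 2) - μ m) := by
      intro i
      rw [hV, hxdef]
      simp only [Fin.val_succ, Nat.succ_ne_zero, if_false, Nat.add_eq, Nat.add_zero]
    have e3 : ∑ i : Fin n, x i.succ * V i.succ m = (-1/K) * ((-(c:ℂ) - μ m) - n * μ m) := by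
      calc ∑ i : Fin n, x i.succ * V i.succ m
          = ∑ i : Fin n, (-1/K) * (μ m ^ ((i:ℕ) + 2) - μ m) :=
            Finset.sum_congr rfl fun i _ => e2 i
        _ = ∑ i ∈ Finset.range n, (-1/K) * (μ m ^ (i + 2) - μ m) :=
            Fin.sum_univ_eq_sum_range (fun i => (-1/K) * (μ m ^ (i + 2) - μ m)) n
        _ = (-1/K) * (∑ i ∈ Finset.range n, μ m ^ (i + 2) - n * μ m) := by
            rw [← Finset.mul_sum, Finset.sum_sub_distrib, Finset.sum_const,
              Finset.card_range, nsmul_eq_mul]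
        _ = (-1/K) * ((-(c:ℂ) - μ m) - n * μ m) := by rw [hsum m]
    rw [e3]
    have ex0 : x 0 = -((n : ℂ) + 1) * τ / K := by simp [hxdef]
    have eV0 : V 0 m = (μ m - 1) / τ := by rw [hV]; simp
    rw [ex0, eV0, hKdef]
    have hK' : (n : ℂ) + (c : ℂ) + 1 ≠ 0 := by rw [hKdef] at hK; exact hK
    field_simp
    ring
  -- V is invertible: its kernel vector would contradict the Vandermonde determinant
  have hdet : V.det ≠ 0 := by
    intro hdet0
    obtain ⟨v, hv0, hvV⟩ := (Matrix.exists_mulVec_eq_zero_iff).2 hdet0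
    -- power sums
    set S : ℕ → ℂ := fun l => ∑ k, v k * μ k ^ l with hSdef
    have hrow : ∀ j : Fin (n+1), ∑ k, V j k * v k = 0 := by
      intro j
      have := congrFun hvV j
      simpa [Matrix.mulVec, dotProduct] using this
    have hS10 : S 1 = S 0 := by
      have h0 := hrow 0
      have h1 : ∑ k, (μ k - 1) * v k = 0 := by
        have e : ∑ k, V 0 k * v k = (∑ k, (μ k - 1) * v k) / τ := by
          rw [Finset.sum_div]; apply Finset.sum_congr rfl; intro k _
          rw [hV]; simp; ring
        rw [e] at h0
        exact (div_eq_zero_iff.1 h0).resolve_right hτ'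
      have e2 : S 1 - S 0 = ∑ k, (μ k - 1) * v k := by
        simp only [hSdef, ← Finset.sum_sub_distrib]
        apply Finset.sum_congr rfl; intro k _; ring
      linear_combination e2 + h1
    have hSj : ∀ i : Fin n, S ((i:ℕ) + 2) = S 1 := by
      intro i
      have h0 := hrow i.succ
      have h1 : ∑ k, (μ k ^ ((i:ℕ) + 2) - μ k) * v k = 0 := by
        have e : ∀ k, V i.succ k = μ k ^ ((i:ℕ) + 2) - μ k := by
          intro k
          rw [hV]
          have hv : ((i.succ : Fin (n+1)) : ℕ) = (i:ℕ) + 1 := rfl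
          rw [hv]
          norm_num
        rw [← h0]; apply Finset.sum_congr rfl; intro k _; rw [e k]
      have e2 : S ((i:ℕ)+2) - S 1 = ∑ k, (μ k ^ ((i:ℕ) + 2) - μ k) * v k := by
        simp only [hSdef, ← Finset.sum_sub_distrib]
        apply Finset.sum_congr rfl; intro k _; ring
      linear_combination e2 + h1
    have hS : ∀ l : ℕ, l ≤ n → S (l + 1) = S l := by
      intro l hl
      match l, hl with
      | 0, _ => exact hS10
      | 1, hl => exact hSj ⟨0, by omega⟩
      | (m+2), hl => exact (hSj ⟨m+1, by omega⟩).trans (hSj ⟨m, by omega⟩).symm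
    -- the modified vector kills the Vandermonde matrix
    set y : Fin (n+1) → ℂ := fun k => v k * (μ k - 1) with hydef
    have hy : Matrix.vecMul y (Matrix.vandermonde μ) = 0 := by
      funext j
      have : Matrix.vecMul y (Matrix.vandermonde μ) j = ∑ k, y k * μ k ^ (j:ℕ) := by
        simp [Matrix.vecMul, dotProduct, Matrix.vandermonde]
      rw [this]
      have e : ∑ k, y k * μ k ^ (j:ℕ) = S ((j:ℕ) + 1) - S (j:ℕ) := by
        simp only [hydef, hSdef, ← Finset.sum_sub_distrib]
        apply Finset.sum_congr rfl; intro k _; ring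
      rw [e, hS (j:ℕ) (by omega)]
      simp
    have hy0 : y ≠ 0 := by
      intro h
      apply hv0
      funext k
      have := congrFun h k
      simp only [hydef, Pi.zero_apply, mul_eq_zero] at this
      rcases this with h' | h'
      · exact h'
      · exact absurd (by linear_combination h' : μ k = 1) (hμ1 k)
    have hvand : (Matrix.vandermonde μ).det = 0 :=
      Matrix.exists_vecMul_eq_zero_iff.1 ⟨y, hy0, hy⟩
    rw [Matrix.det_vandermonde] at hvand
    have : ∃ i ∈ Finset.univ, ∃ j ∈ Finset.Ioi i, μ j - μ i = 0 := by
      by_contra hcon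
      push_neg at hcon
      exact absurd hvand (Finset.prod_ne_zero_iff.2 fun i hi =>
        Finset.prod_ne_zero_iff.2 fun j hj => hcon i hi j hj)
    obtain ⟨i, _, j, hj, hij⟩ := this
    have : μ j = μ i := by linear_combination hij
    rw [Finset.mem_Ioi] at hj
    exact ne_of_gt hj (hinj this)
  -- conclude: x = 1ᵀ V⁻¹
  have hKunit : IsUnit V.det := isUnit_iff_ne_zero.2 hdet
  have hxinv : x = Matrix.vecMul (fun _ => (1:ℂ)) V⁻¹ := by
    calc x = Matrix.vecMul x (V * V⁻¹) := by
          rw [Matrix.mul_nonsing_inv _ hKunit, Matrix.vecMul_one]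
      _ = Matrix.vecMul (Matrix.vecMul x V) V⁻¹ := (Matrix.vecMul_vecMul _ _ _).symm
      _ = Matrix.vecMul (fun _ => (1:ℂ)) V⁻¹ := by rw [hx]
  have hcol : ∀ k, ∑ j, V⁻¹ j k = x k := by
    intro k
    have := congrFun hxinv k
    rw [this]
    simp [Matrix.vecMul, dotProduct]
  constructor
  · intro k hk
    rw [hcol k, hxdef]
    simp [hk]
  · rw [hcol 0, hxdef]
    simp
end

section
/- With V the eigenvector matrix defined by V_{1k} = (μ_k − 1)/τ, V_{jk} = μ_k^j − μ_k (2 ≤ j ≤ n+1), where μ₁, …, μ_{n+1} are the roots of c + μ + ⋯ + μ^{n+1} = 0 with c > 1 and τ = T/n for fixed T > 0, the matrix 1-norm satisfies ‖V‖₁ ≤ (2c/T)n + (4c−2)n, i.e., ‖V‖₁ = O(cn). -/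
/-- The eigenvector matrix `V` (with `V_{1k} = (μ_k − 1)/τ`, `V_{jk} = μ_k^j − μ_k`,
`τ = T/n`) built from the roots of `c + μ + ⋯ + μ^{n+1} = 0` with `c > 1` satisfies
`‖V‖₁ ≤ (2c/T)n + (4c−2)n`, i.e. every absolute column sum is at most that bound. -/
theorem stmt8 (n : ℕ) (hn : 1 ≤ n) (c T : ℝ) (hc : 1 < c) (hT : 0 < T)
    (μ : Fin (n + 1) → ℂ) (hinj : Function.Injective μ)
    (hroot : ∀ k, (c : ℂ) + ∑ l ∈ Finset.range (n + 1), μ k ^ (l + 1) = 0)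
    (V : Matrix (Fin (n + 1)) (Fin (n + 1)) ℂ)
    (hV : ∀ i k, V i k =
      if (i : ℕ) = 0 then (μ k - 1) / ((T / n : ℝ) : ℂ) else μ k ^ ((i : ℕ) + 1) - μ k) :
    ∀ k : Fin (n + 1),
      ∑ j, ‖V j k‖ ≤ (2 * c / T) * n + (4 * c - 2) * n := by
  have hn0 : (0:ℝ) < (n:ℝ) := by exact_mod_cast hn
  have hr : ∀ k : Fin (n+1), ∀ j : ℕ, 1 ≤ j → j ≤ n+1 →
      ‖μ k‖ ^ j < 2*c - 1 := by
    intro k j hj1 hj2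
    set r := ‖μ k‖ with hrdef
    have hr0 : 0 ≤ r := norm_nonneg _
    by_cases hle : r ≤ 1
    · calc r^j ≤ 1^j := pow_le_pow_left₀ hr0 hle j
        _ = 1 := one_pow j
        _ < 2*c-1 := by linarith
    · push_neg at hle
      have h1 : (μ k) * ∑ l ∈ Finset.range (n+1), μ k ^ l = -(c:ℂ) := by
        have h := hroot k
        rw [Finset.mul_sum]
        have he : ∀ l ∈ Finset.range (n+1), μ k * μ k ^ l = μ k ^ (l+1) := by
          intro l _; rw [pow_succ, mul_comm]
        rw [Finset.sum_congr rfl he]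
        linear_combination h
      have h2 := geom_sum_mul (μ k) (n+1)
      have key : (μ k)^(n+2) = (c:ℂ) - ((c:ℂ)-1) * μ k := by
        linear_combination (μ k - 1) * h1 - μ k * h2
      have habs : r^(n+2) ≤ c + (c-1)*r := by
        have h3 := congrArg (‖·‖) key
        rw [norm_pow] at h3
        calc r^(n+2) = ‖(c:ℂ) - ((c:ℂ)-1)*μ k‖ := h3
          _ ≤ ‖(c:ℂ)‖ + ‖((c:ℂ)-1)*μ k‖ := by
              exact norm_sub_le _ _
          _ = c + (c-1)*r := by
              rw [norm_mul, Complex.norm_real, Real.norm_eq_abs]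
              have : ((c:ℂ) - 1) = ((c - 1 : ℝ) : ℂ) := by push_cast; ring
              rw [this, Complex.norm_real, Real.norm_eq_abs, abs_of_pos (by linarith), abs_of_pos (by linarith)]
      have hstep : r^(n+1) * r < (2*c-1) * r := by
        have : r^(n+2) = r^(n+1) * r := by ring
        nlinarith [hle, habs]
      have hn1 : r^(n+1) < 2*c-1 := lt_of_mul_lt_mul_right hstep hr0
      calc r^j ≤ r^(n+1) := pow_le_pow_right₀ (le_of_lt hle) hj2
        _ < 2*c-1 := hn1
  intro k
  rw [Fin.sum_univ_succ]
  have hfirst : ‖V 0 k‖ ≤ 2 * c / T * n := by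
    rw [hV]
    simp only [Fin.val_zero, ite_true]
    rw [norm_div, Complex.norm_real, Real.norm_eq_abs, abs_of_pos (by positivity : (0:ℝ) < T / n)]
    have h1 : ‖μ k - 1‖ ≤ ‖μ k‖ + 1 := by
      simpa using norm_sub_le (μ k) 1
    have h2 : ‖μ k‖ < 2*c - 1 := by
      have := hr k 1 le_rfl (by omega); simpa using this
    have h3 : ‖μ k - 1‖ ≤ 2 * c := by linarith
    calc ‖μ k - 1‖ / (T / n) ≤ (2*c) / (T / n) := by
          gcongr
      _ = 2 * c / T * n := by field_simp
  have hrest : ∀ j : Fin n, ‖V j.succ k‖ ≤ 4 * c - 2 := by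
    intro j
    rw [hV]
    have hne : ((j.succ : Fin (n+1)) : ℕ) ≠ 0 := by simp [Fin.val_succ]
    rw [if_neg hne]
    have hp : ‖μ k‖ ^ (((j.succ : Fin (n+1)) : ℕ) + 1) < 2*c-1 := by
      apply hr k _ (by omega)
      have := j.isLt
      simp [Fin.val_succ]
    have h2 : ‖μ k‖ < 2*c - 1 := by
      have := hr k 1 le_rfl (by omega); simpa using this
    calc ‖μ k ^ (((j.succ : Fin (n+1)) : ℕ) + 1) - μ k‖
        ≤ ‖μ k ^ (((j.succ : Fin (n+1)) : ℕ) + 1)‖ + ‖μ k‖ := by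
          exact norm_sub_le _ _
      _ = ‖μ k‖ ^ (((j.succ : Fin (n+1)) : ℕ) + 1) + ‖μ k‖ := by
          rw [norm_pow]
      _ ≤ 4*c - 2 := by linarith
  calc ‖V 0 k‖ + ∑ j : Fin n, ‖V j.succ k‖
      ≤ 2 * c / T * n + ∑ j : Fin n, (4*c-2) := by
        exact add_le_add hfirst (Finset.sum_le_sum fun j _ => hrest j)
    _ = 2 * c / T * n + (4 * c - 2) * n := by
        rw [Finset.sum_const, Finset.card_univ, Fintype.card_fin]
        push_cast; ring
end

section
/- Let V be the eigenvector matrix of the time-discretization matrix B (with α = 1/τ + τ/β), built from the distinct roots μ₁, …, μ_{n+1} of c + μ + ⋯ + μ^{n+1} = 0 where c = β/τ² > 1. Then for n > 11, the inverse W = V^{−1} satisfies |W_{jk}| < (8 + 4τ(n+2))/n for all j, k; in particular ‖W‖₁ = O(1) and the condition number satisfies κ₁(V) = ‖V‖₁‖W‖₁ = O(cn). -/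
open Complex Real

lemma aux_im (m : ℕ) (μ : ℂ) (hre : 0 < μ.re) (hz : (μ ^ m).re < 0) :
    ‖μ‖ ≤ m * |μ.im| := by
  have hμ0 : μ ≠ 0 := fun h => by simp [h] at hre
  have habs : (0:ℝ) < ‖μ‖ := norm_pos_iff.mpr hμ0
  set θ := Complex.arg μ with hθ
  have hμeq : (‖μ‖ : ℂ) * Complex.exp (θ * Complex.I) = μ :=
    Complex.norm_mul_exp_arg_mul_I μ
  have hpow : (μ ^ m).re = (‖μ‖) ^ m * Real.cos (m * θ) := by
    conv_lhs => rw [← hμeq]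
    rw [mul_pow, ← Complex.exp_nat_mul,
      show ((‖μ‖ : ℂ))^m = ((‖μ‖ ^ m : ℝ) : ℂ) by push_cast; ring,
      show (m : ℂ) * (θ * Complex.I) = ((m * θ : ℝ) : ℂ) * Complex.I by push_cast; ring,
      Complex.re_ofReal_mul, Complex.exp_ofReal_mul_I_re]
  have hcos : Real.cos (m * θ) < 0 := by
    nlinarith [pow_pos habs m, hpow]
  have hθlt : |θ| < π / 2 := Complex.abs_arg_lt_pi_div_two_iff.2 (Or.inl hre)
  have hθgt : π / 2 < m * |θ| := by
    by_contra h
    push_neg at h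
    have : 0 ≤ Real.cos (m * θ) := by
      apply Real.cos_nonneg_of_mem_Icc
      constructor
      · nlinarith [abs_nonneg θ, neg_abs_le θ, Nat.cast_nonneg (α := ℝ) m]
      · nlinarith [le_abs_self θ, Nat.cast_nonneg (α := ℝ) m]
    linarith
  have hm0 : (0:ℝ) < m := by
    rcases Nat.eq_zero_or_pos m with h | h
    · exfalso; rw [h] at hz; norm_num at hz
    · exact_mod_cast h
  have hsin : μ.im = ‖μ‖ * Real.sin θ := by
    have h1 : Real.sin (arg μ) = μ.im / ‖μ‖ := Complex.sin_arg μ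
    rw [hθ, h1]; field_simp
  have hsinabs : |μ.im| = ‖μ‖ * |Real.sin θ| := by
    rw [hsin, abs_mul, _root_.abs_of_pos habs]
  have hsineq : |Real.sin θ| = Real.sin |θ| := by
    rcases le_or_gt 0 θ with h | h
    · rw [_root_.abs_of_nonneg h, _root_.abs_of_nonneg
        (Real.sin_nonneg_of_nonneg_of_le_pi h (by nlinarith [Real.pi_pos, le_abs_self θ]))]
    · rw [abs_of_neg h, Real.sin_neg, _root_.abs_of_nonpos]
      exact Real.sin_nonpos_of_nonpos_of_neg_pi_le (by linarith) (by nlinarith [Real.pi_pos, neg_abs_le θ])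
  have key : 2 / π * |θ| ≤ Real.sin |θ| := Real.mul_le_sin (abs_nonneg θ) (le_of_lt hθlt)
  have hs : 1 / (m : ℝ) ≤ Real.sin |θ| := by
    have hπ := Real.pi_pos
    calc (1 : ℝ) / m = 2 / π * (π / 2 / m) := by field_simp
    _ ≤ 2 / π * |θ| := by
        apply mul_le_mul_of_nonneg_left _ (by positivity)
        rw [div_le_iff₀ hm0]
        nlinarith
    _ ≤ Real.sin |θ| := key
  rw [hsinabs, hsineq]
  calc ‖μ‖ = m * (‖μ‖ * (1/m)) := by field_simp
  _ ≤ m * (‖μ‖ * Real.sin |θ|) := by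
      apply mul_le_mul_of_nonneg_left _ (le_of_lt hm0)
      exact mul_le_mul_of_nonneg_left hs (le_of_lt habs)

set_option maxHeartbeats 1000000 in
/-- For `n > 11`, `τ = T/n`, `c = β/τ² > 1`, the inverse `W = V⁻¹` of the eigenvector
matrix `V` (built from the distinct roots of `c + μ + ⋯ + μ^{n+1} = 0`) satisfies the
entrywise bound `|W_{jk}| < (8 + 4τ(n+2))/n`; in particular `‖W‖₁ = O(1)` and
`κ₁(V) = ‖V‖₁‖W‖₁ = O(cn)`. -/
theorem stmt9 (n : ℕ) (hn : 11 < n) (T β τ c : ℝ) (hT : 0 < T) (hβ : 0 < β)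
    (hτ : τ = T / n) (hcdef : c = β / τ ^ 2) (hc : 1 < c)
    (μ : Fin (n + 1) → ℂ) (hinj : Function.Injective μ)
    (hroot : ∀ k, (c : ℂ) + ∑ l ∈ Finset.range (n + 1), μ k ^ (l + 1) = 0)
    (V : Matrix (Fin (n + 1)) (Fin (n + 1)) ℂ)
    (hV : ∀ i k, V i k =
      if (i : ℕ) = 0 then (μ k - 1) / (τ : ℂ) else μ k ^ ((i : ℕ) + 1) - μ k) :
    ∀ j k : Fin (n + 1),
      ‖V⁻¹ j k‖ < (8 + 4 * τ * ((n : ℝ) + 2)) / n := by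
  have hn0 : (0:ℝ) < n := by positivity
  have hτpos : 0 < τ := by rw [hτ]; positivity
  have hτ0 : (τ:ℂ) ≠ 0 := by exact_mod_cast ne_of_gt hτpos
  have hcpos : (0:ℝ) < c := by linarith
  -- μ k ≠ 1
  have hμne1 : ∀ k, μ k ≠ 1 := by
    intro k h
    have h0 := hroot k
    rw [h] at h0
    simp only [one_pow, Finset.sum_const, Finset.card_range, nsmul_eq_mul, mul_one] at h0
    push_cast at h0
    have h1 : ((c + ((n:ℝ)+1) : ℝ) : ℂ) = 0 := by push_cast; linear_combination h0
    have h2 : (c + ((n:ℝ)+1) : ℝ) = 0 := by exact_mod_cast h1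
    linarith
  -- the key algebraic relation
  have hrel : ∀ k, μ k ^ (n+2) = (c:ℂ) - ((c:ℂ)-1) * μ k := by
    intro k
    have hg : (∑ l ∈ Finset.range (n+1), μ k ^ l) * (μ k - 1) = μ k ^ (n+1) - 1 :=
      geom_sum_mul _ _
    have hs : (∑ l ∈ Finset.range (n+1), μ k ^ (l+1))
        = (∑ l ∈ Finset.range (n+1), μ k ^ l) * μ k := by
      rw [Finset.sum_mul]
      exact Finset.sum_congr rfl fun l _ => (pow_succ _ _)
    have h0 := hroot k
    rw [hs] at h0
    linear_combination (-(μ k)) * hg + (μ k - 1) * h0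
  -- |μ k| ≥ 1
  have habs1 : ∀ k, 1 ≤ ‖μ k‖ := by
    intro k
    by_contra h
    push_neg at h
    have h1 : ‖μ k ^ (n+2)‖ < 1 := by
      rw [norm_pow]
      exact pow_lt_one₀ (norm_nonneg _) h (by omega)
    have h2 : ‖(c:ℂ) - ((c:ℂ)-1) * μ k‖ ≥ c - (c-1) * ‖μ k‖ := by
      have h3 := norm_sub_norm_le ((c:ℂ)) (((c:ℂ)-1) * μ k)
      have h4 : ‖(c:ℂ)‖ = c := by
        rw [Complex.norm_real, Real.norm_eq_abs, abs_of_pos hcpos]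
      have h5 : ‖((c:ℂ)-1) * μ k‖ = (c-1) * ‖μ k‖ := by
        rw [norm_mul,
          show ((c:ℂ) - 1) = ((c - 1 : ℝ) : ℂ) by push_cast; ring,
          Complex.norm_real, Real.norm_eq_abs, abs_of_pos (by linarith)]
      rw [h4, h5] at h3
      exact h3
    rw [hrel k] at h1
    have habsk := norm_nonneg (μ k)
    nlinarith
  have hne0 : ∀ k, μ k ≠ 0 := by
    intro k h
    have := habs1 k
    rw [h] at this
    simp only [norm_zero] at this
    linarith
  -- main lower bound on |μ j * d j|
  have hdmain : ∀ j, (n:ℝ)*c < 4*((n:ℝ)+2) *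
      ‖μ j * (((n:ℂ)+2) * μ j ^ (n+1) + ((c:ℂ)-1))‖ := by
    intro j
    by_contra hA
    push_neg at hA
    set F := μ j * (((n:ℂ)+2) * μ j ^ (n+1) + ((c:ℂ)-1)) with hFdef
    set A := ‖F‖ with hAdef
    have hApos : 0 ≤ A := norm_nonneg F
    have hAc : A < c := by nlinarith
    set s : ℝ := ((n:ℝ)+1)*(c-1) with hsdef
    have hspos : 0 < s := by rw [hsdef]; nlinarith [hn0]
    have hεeq : F = ((((n:ℝ)+2)*c : ℝ) : ℂ) - ((s : ℝ) : ℂ) * μ j := by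
      rw [hFdef, hsdef]
      push_cast
      linear_combination ((n:ℂ)+2) * hrel j
    have hre : F.re = ((n:ℝ)+2)*c - s * (μ j).re := by
      rw [hεeq]
      simp [Complex.sub_re, Complex.ofReal_re, Complex.re_ofReal_mul]
    have him : F.im = -(s * (μ j).im) := by
      rw [hεeq]
      simp [Complex.sub_im, Complex.ofReal_im, Complex.im_ofReal_mul]
    have hFre : |F.re| ≤ A := Complex.abs_re_le_norm F
    have hFim : |F.im| ≤ A := Complex.abs_im_le_norm F
    -- lower bound for s * |μ j|
    have h6 : ((s : ℝ) : ℂ) * μ j = ((((n:ℝ)+2)*c : ℝ) : ℂ) - F := by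
      rw [hεeq]; ring
    have h7 : s * ‖μ j‖ = ‖((((n:ℝ)+2)*c : ℝ) : ℂ) - F‖ := by
      rw [← h6, norm_mul, Complex.norm_real, Real.norm_eq_abs, abs_of_pos hspos]
    have h8 : ((n:ℝ)+2)*c - A ≤ ‖((((n:ℝ)+2)*c : ℝ) : ℂ) - F‖ := by
      have h9 := norm_sub_norm_le ((((n:ℝ)+2)*c : ℝ) : ℂ) F
      rw [Complex.norm_real, Real.norm_eq_abs,
        abs_of_pos (by positivity)] at h9
      exact h9
    have hlow : ((n:ℝ)+1)*c ≤ s * ‖μ j‖ := by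
      rw [h7]; nlinarith
    -- real part of μ j positive
    have hrepos : 0 < (μ j).re := by
      have h10 : s * (μ j).re = ((n:ℝ)+2)*c - F.re := by linarith
      nlinarith [abs_nonneg F.re, le_abs_self F.re]
    -- real part of μ j ^ (n+2) negative
    have hzre : ((μ j) ^ (n+2)).re < 0 := by
      have h11 : ((((n:ℝ)+1) : ℝ) : ℂ) * μ j ^ (n+2) = F - ((c:ℝ):ℂ) := by
        rw [hFdef]; push_cast
        linear_combination (-1:ℂ) * hrel j
      have h12 := congrArg Complex.re h11
      simp only [Complex.re_ofReal_mul, Complex.sub_re, Complex.ofReal_re] at h12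
      nlinarith [le_abs_self F.re]
    have haux := aux_im (n+2) (μ j) hrepos hzre
    push_cast at haux
    have himabs : s * |(μ j).im| ≤ A := by
      have : |F.im| = s * |(μ j).im| := by
        rw [him, abs_neg, abs_mul, abs_of_pos hspos]
      linarith
    -- contradiction
    have e1 : s * ‖μ j‖ ≤ ((n:ℝ)+2) * A := by
      calc s * ‖μ j‖ ≤ s * (((n:ℝ)+2) * |(μ j).im|) :=
            mul_le_mul_of_nonneg_left haux (le_of_lt hspos)
      _ = ((n:ℝ)+2) * (s * |(μ j).im|) := by ring
      _ ≤ ((n:ℝ)+2) * A := mul_le_mul_of_nonneg_left himabs (by positivity)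
    have e2 : ((n:ℝ)+1)*c ≤ ((n:ℝ)+2) * A := le_trans hlow e1
    have e3 : 4*(((n:ℝ)+1)*c) ≤ (n:ℝ)*c := by linarith
    nlinarith [hcpos, hn0]
    -- denominators are nonzero
  have hD0 : ∀ j, (((n:ℂ)+2) * μ j ^ (n+1) + ((c:ℂ)-1)) ≠ 0 := by
    intro j h
    have h1 := hdmain j
    rw [h, mul_zero, norm_zero] at h1
    nlinarith
  -- the explicit inverse
  have hinv : V⁻¹ = Matrix.of (fun j k : Fin (n+1) =>
      if (k:ℕ) = 0 then -((τ:ℂ)*(c:ℂ)) / (μ j * (((n:ℂ)+2) * μ j ^ (n+1) + ((c:ℂ)-1)))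
      else μ j ^ (n - (k:ℕ)) / (((n:ℂ)+2) * μ j ^ (n+1) + ((c:ℂ)-1))) := by
    apply Matrix.inv_eq_left_inv
    ext j k
    rw [Matrix.mul_apply, Matrix.one_apply, Fin.sum_univ_succ]
    have hV0 : V 0 k = (μ k - 1) / (τ:ℂ) := by rw [hV]; simp
    have hW0 : (Matrix.of (fun j k : Fin (n+1) =>
        if (k:ℕ) = 0 then -((τ:ℂ)*(c:ℂ)) / (μ j * (((n:ℂ)+2) * μ j ^ (n+1) + ((c:ℂ)-1)))
        else μ j ^ (n - (k:ℕ)) / (((n:ℂ)+2) * μ j ^ (n+1) + ((c:ℂ)-1)))) j 0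
        = -((τ:ℂ)*(c:ℂ)) / (μ j * (((n:ℂ)+2) * μ j ^ (n+1) + ((c:ℂ)-1))) := by
      simp [Matrix.of_apply]
    rw [hW0, hV0]
    -- the tail sum
    have htail : (∑ i : Fin n, (Matrix.of (fun j k : Fin (n+1) =>
        if (k:ℕ) = 0 then -((τ:ℂ)*(c:ℂ)) / (μ j * (((n:ℂ)+2) * μ j ^ (n+1) + ((c:ℂ)-1)))
        else μ j ^ (n - (k:ℕ)) / (((n:ℂ)+2) * μ j ^ (n+1) + ((c:ℂ)-1)))) j i.succ * V i.succ k)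
        = (∑ i ∈ Finset.range n, μ j ^ (n - (i+1)) * (μ k ^ (i+2) - μ k))
            / (((n:ℂ)+2) * μ j ^ (n+1) + ((c:ℂ)-1)) := by
      rw [Finset.sum_div]
      rw [← Fin.sum_univ_eq_sum_range (fun i =>
        μ j ^ (n - (i+1)) * (μ k ^ (i+2) - μ k) / (((n:ℂ)+2) * μ j ^ (n+1) + ((c:ℂ)-1))) n]
      refine Finset.sum_congr rfl fun i _ => ?_
      have h1 : ((i.succ : Fin (n+1)) : ℕ) = (i:ℕ)+1 := Fin.val_succ i
      rw [Matrix.of_apply, hV]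
      simp only [h1]
      rw [if_neg (by omega), if_neg (by omega)]
      rw [show (i:ℕ)+1+1 = (i:ℕ)+2 by omega]
      ring
    rw [htail]
    -- decompose the inner sum
    have hS : (∑ i ∈ Finset.range n, μ j ^ (n - (i+1)) * (μ k ^ (i+2) - μ k))
        = μ k^2 * (∑ i ∈ Finset.range n, μ k ^ i * μ j ^ (n-1-i))
          - μ k * (∑ i ∈ Finset.range n, μ j ^ i) := by
      rw [← Finset.sum_range_reflect (fun i => μ j ^ i) n,
        Finset.mul_sum, Finset.mul_sum, ← Finset.sum_sub_distrib]
      refine Finset.sum_congr rfl fun i hi => ?_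
      rw [show n - (i+1) = n-1-i by omega]
      ring
    rw [hS]
    have h2 := hne0 j
    have h2k := hne0 k
    have h3 := sub_ne_zero.2 (hμne1 j)
    have h4 := hD0 j
    have hH : (∑ i ∈ Finset.range n, μ j ^ i) = (μ j ^ n - 1) / (μ j - 1) := by
      rw [eq_div_iff h3]
      exact geom_sum_mul _ _
    have e1 : -((τ:ℂ)*(c:ℂ))/(μ j * (((n:ℂ)+2) * μ j ^ (n+1) + ((c:ℂ)-1))) * ((μ k - 1)/(τ:ℂ))
        = (-(c:ℂ)*(μ k - 1)/μ j)/(((n:ℂ)+2) * μ j ^ (n+1) + ((c:ℂ)-1)) := by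
      rw [div_mul_div_comm,
        show μ j * (((n:ℂ)+2) * μ j ^ (n+1) + ((c:ℂ)-1)) * (τ:ℂ)
          = (τ:ℂ) * (μ j * (((n:ℂ)+2) * μ j ^ (n+1) + ((c:ℂ)-1))) by ring,
        show -((τ:ℂ)*(c:ℂ))*(μ k - 1) = (τ:ℂ) * (-(c:ℂ)*(μ k - 1)) by ring,
        mul_div_mul_left _ _ hτ0, ← div_div]
    rw [e1, ← add_div]
    by_cases hjk : j = k
    · subst hjk
      rw [if_pos rfl]
      have hG : (∑ i ∈ Finset.range n, μ j ^ i * μ j ^ (n-1-i)) = (n:ℂ) * μ j ^ n / μ j := by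
        rw [eq_div_iff h2, Finset.sum_mul]
        have : ∀ i ∈ Finset.range n, μ j ^ i * μ j ^ (n-1-i) * μ j = μ j ^ n := by
          intro i hi
          rw [Finset.mem_range] at hi
          calc μ j ^ i * μ j ^ (n-1-i) * μ j = μ j ^ (i + (n-1-i) + 1) := by ring
          _ = μ j ^ n := by rw [show i + (n-1-i) + 1 = n by omega]
        rw [Finset.sum_congr rfl this, Finset.sum_const, Finset.card_range, nsmul_eq_mul]
      rw [hG, hH, div_eq_one_iff_eq h4]
      field_simp
      linear_combination (1 - 2 * μ j) * hrel j
    · rw [if_neg hjk]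
      have hkj : μ k - μ j ≠ 0 := sub_ne_zero.2 fun h => hjk (hinj h).symm
      have hG : (∑ i ∈ Finset.range n, μ k ^ i * μ j ^ (n-1-i))
          = (μ k ^ n - μ j ^ n) / (μ k - μ j) := by
        rw [eq_div_iff hkj]
        exact geom_sum₂_mul _ _ _
      rw [hG, hH, div_eq_zero_iff]
      left
      field_simp
      linear_combination (-(μ k)*(μ k - 1)) * hrel j + (μ j*(μ j - 1)) * hrel k
  -- final bounds
  intro j k
  rw [hinv, Matrix.of_apply]
  have hA := hdmain j
  rw [norm_mul] at hA
  set m := ‖μ j‖ with hmdef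
  set B := ‖((n:ℂ)+2) * μ j ^ (n+1) + ((c:ℂ)-1)‖ with hBdef
  have hm1 : 1 ≤ m := habs1 j
  have hmpos : 0 < m := by linarith
  have hmB : 0 < m * B := by
    by_contra h
    push_neg at h
    nlinarith [mul_nonneg (by positivity : (0:ℝ) ≤ 4*((n:ℝ)+2)) (neg_nonneg.2 h),
      mul_pos hn0 hcpos]
  have hBpos : 0 < B := by
    rcases lt_or_ge 0 B with h | h
    · exact h
    · exfalso; nlinarith [mul_nonneg hmpos.le (neg_nonneg.2 h)]
  by_cases hk : (k:ℕ) = 0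
  · rw [if_pos hk]
    have habs : ‖-((τ:ℂ)*(c:ℂ)) /
        (μ j * (((n:ℂ)+2) * μ j ^ (n+1) + ((c:ℂ)-1)))‖ = (τ*c)/(m*B) := by
      rw [show -((τ:ℂ)*(c:ℂ)) = ((-(τ*c) : ℝ) : ℂ) by push_cast; ring,
        norm_div, Complex.norm_real, Real.norm_eq_abs, abs_neg, abs_of_pos (by positivity), norm_mul]
    rw [habs, div_lt_div_iff₀ (by positivity) hn0]
    nlinarith [mul_lt_mul_of_pos_left hA hτpos, mul_pos hmpos hBpos]
  · rw [if_neg hk]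
    have hk1 : 1 ≤ (k:ℕ) := by omega
    have habs : ‖μ j ^ (n - (k:ℕ)) /
        (((n:ℂ)+2) * μ j ^ (n+1) + ((c:ℂ)-1))‖ = m ^ (n - (k:ℕ)) / B := by
      rw [norm_div, norm_pow]
    rw [habs]
    have hup : ((n:ℝ)+1) * m ^ (n+2) ≤ m*B + c := by
      have h11 : ((((n:ℝ)+1) : ℝ) : ℂ) * μ j ^ (n+2)
          = μ j * (((n:ℂ)+2) * μ j ^ (n+1) + ((c:ℂ)-1)) - ((c:ℝ):ℂ) := by
        push_cast
        linear_combination (-1:ℂ) * hrel j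
      have h12 := congrArg (‖·‖) h11
      rw [norm_mul, Complex.norm_real, Real.norm_eq_abs, abs_of_pos (by positivity : (0:ℝ) < (n:ℝ)+1),
        norm_pow] at h12
      have h13 := norm_sub_le (μ j * (((n:ℂ)+2) * μ j ^ (n+1) + ((c:ℂ)-1))) ((c:ℝ):ℂ)
      rw [Complex.norm_real, Real.norm_eq_abs, abs_of_pos hcpos, norm_mul] at h13
      rw [← hmdef] at h12 h13
      rw [← hBdef] at h13
      calc ((n:ℝ)+1) * m ^ (n+2) = ‖μ j * (((n:ℂ)+2) * μ j ^ (n+1) + ((c:ℂ)-1)) - ((c:ℝ):ℂ)‖ := h12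
      _ ≤ m*B + c := h13
    have hs2 : m ^ (n - (k:ℕ)) * m ≤ m ^ (n+2) := by
      rw [← pow_succ]
      exact pow_le_pow_right₀ hm1 (by omega)
    have hXn : m ^ (n - (k:ℕ)) * (n:ℝ) * m < 8 * B * m := by
      nlinarith [mul_le_mul_of_nonneg_left hs2
          (by positivity : (0:ℝ) ≤ (n:ℝ)*((n:ℝ)+1)),
        mul_le_mul_of_nonneg_left hup (le_of_lt hn0),
        mul_pos hmpos hBpos, pow_nonneg (le_of_lt hmpos) (n - (k:ℕ))]
    have hXn' : m ^ (n - (k:ℕ)) * (n:ℝ) < 8 * B :=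
      lt_of_mul_lt_mul_right hXn (le_of_lt hmpos)
    rw [div_lt_div_iff₀ hBpos hn0]
    nlinarith [mul_pos (mul_pos hτpos (by positivity : (0:ℝ) < (n:ℝ)+2)) hBpos]
end

section
/- Let λ be an eigenvalue of the (n+1)×(n+1) matrix B with first row (α, 0, …, 0, 1/β), subdiagonal structure B_{j1} = −1 for j ≥ 2, B_{jj} = 1/τ for j ≥ 2, B_{j,j−1} = −1/τ for j ≥ 3, and zeros elsewhere, where α = 1/τ + τ/β. Then μ = 1/(1 − τλ) satisfies c + μ + μ² + ⋯ + μ^{n+1} = 0 with c = β/τ². Conversely each root μ of this equation gives an eigenvalue λ = (1 − 1/μ)/τ of B. -/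
/-- The time-discretization matrix `B` of the parameterized quasi-boundary value method:
first row `(α, 0, …, 0, 1/β)`, first column entries `−1` from row 2 on, diagonal `1/τ`
from row 2 on, subdiagonal `−1/τ` from row 3 on. -/
noncomputable def Bmat (n : ℕ) (α τ β : ℝ) : Matrix (Fin (n + 1)) (Fin (n + 1)) ℝ :=
  fun i j =>
    if (i : ℕ) = 0 then
      (if (j : ℕ) = 0 then α else if (j : ℕ) = n then 1 / β else 0)
    else if (j : ℕ) = 0 then -1
    else if j = i then 1 / τ
    else if (j : ℕ) + 1 = (i : ℕ) then -1 / τ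
    else 0

lemma row0 (n : ℕ) (hn : 1 ≤ n) (α τ β : ℝ) (v : Fin (n+1) → ℂ) :
    ((Bmat n α τ β).map Complex.ofReal).mulVec v 0 =
      (α : ℂ) * v 0 + ((1/β : ℝ) : ℂ) * v ⟨n, n.lt_succ_self⟩ := by
  unfold Matrix.mulVec dotProduct
  have : ∀ j : Fin (n+1),
      ((Bmat n α τ β).map Complex.ofReal) 0 j * v j =
        (if j = (0 : Fin (n+1)) then (α : ℂ) * v j else 0) +
        (if j = (⟨n, n.lt_succ_self⟩ : Fin (n+1)) then ((1/β : ℝ) : ℂ) * v j else 0) := by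
    intro j
    simp only [Matrix.map_apply, Bmat, Fin.ext_iff, Fin.val_zero]
    by_cases h0 : (j : ℕ) = 0
    · have t1 : ¬ (0 : ℕ) = n := by omega
      simp [h0, t1]
    · have t1 : ¬ n = 0 := by omega
      by_cases hn' : (j : ℕ) = n <;> simp [h0, hn', t1]
  rw [Finset.sum_congr rfl (fun j _ => this j), Finset.sum_add_distrib,
    Finset.sum_ite_eq' Finset.univ, Finset.sum_ite_eq' Finset.univ]
  simp

lemma rowS (n : ℕ) (α τ β : ℝ) (v : Fin (n+1) → ℂ) (k : ℕ) (hk : k < n + 1) (hk0 : k ≠ 0) :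
    ((Bmat n α τ β).map Complex.ofReal).mulVec v ⟨k, hk⟩ =
      -v 0 + ((1/τ : ℝ) : ℂ) * v ⟨k, hk⟩ +
        (if 2 ≤ k then ((-1/τ : ℝ) : ℂ) * v ⟨k - 1, by omega⟩ else 0) := by
  unfold Matrix.mulVec dotProduct
  have : ∀ j : Fin (n+1),
      ((Bmat n α τ β).map Complex.ofReal) ⟨k, hk⟩ j * v j =
        (if j = (0 : Fin (n+1)) then -v j else 0) +
        (if j = (⟨k, hk⟩ : Fin (n+1)) then ((1/τ : ℝ) : ℂ) * v j else 0) +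
        (if 2 ≤ k ∧ j = (⟨k - 1, by omega⟩ : Fin (n+1)) then ((-1/τ : ℝ) : ℂ) * v j else 0) := by
    intro j
    simp only [Matrix.map_apply, Bmat, Fin.ext_iff, Fin.val_zero]
    by_cases h0 : (j : ℕ) = 0
    · have t1 : ¬ (0:ℕ) = k := by omega
      have t2 : ¬ (2 ≤ k ∧ (0:ℕ) = k - 1) := by omega
      simp [h0, hk0, t1, t2]
    · by_cases hkk : (j : ℕ) = k
      · have t1 : ¬ (k = k - 1) := by omega
        simp [h0, hkk, hk0, t1]
      · by_cases hsub : (j : ℕ) + 1 = k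
        · have h2 : 2 ≤ k := by omega
          have hja : (j : ℕ) = k - 1 := by omega
          have t1 : ¬ (k - 1 = 0) := by omega
          have t2 : ¬ (k - 1 = k) := by omega
          have t3 : k - 1 + 1 = k := by omega
          simp [h0, hkk, hja, hk0, h2, t1, t2, t3]
        · have t1 : ¬ ((j:ℕ) = k - 1 ∧ 2 ≤ k) := by omega
          have t2 : ¬ (2 ≤ k ∧ (j:ℕ) = k - 1) := by omega
          simp [h0, hkk, hsub, hk0, t1, t2]
  rw [Finset.sum_congr rfl (fun j _ => this j), Finset.sum_add_distrib, Finset.sum_add_distrib,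
    Finset.sum_ite_eq' Finset.univ, Finset.sum_ite_eq' Finset.univ]
  by_cases h2 : 2 ≤ k
  · simp [h2, Finset.sum_ite_eq' Finset.univ]
  · simp [h2]

lemma Ssucc (μ : ℂ) (k : ℕ) :
    (∑ l ∈ Finset.range (k+1), μ^(l+1)) = μ * (1 + ∑ l ∈ Finset.range k, μ^(l+1)) := by
  rw [Finset.sum_range_succ', mul_add, mul_one, Finset.mul_sum]
  rw [add_comm]
  congr 1
  · norm_num
  · exact Finset.sum_congr rfl fun l _ => by ring

/-- Eigenvalues `λ` of `B` (with `α = 1/τ + τ/β`) correspond to roots `μ = 1/(1−τλ)` of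
`c + μ + ⋯ + μ^{n+1} = 0` with `c = β/τ²`, and conversely each root `μ` gives the
eigenvalue `λ = (1 − 1/μ)/τ` of `B`. -/
theorem stmt10 (n : ℕ) (hn : 1 ≤ n) (τ β : ℝ) (hτ : 0 < τ) (hβ : 0 < β) :
    (∀ lam : ℂ,
        (∃ v : Fin (n + 1) → ℂ, v ≠ 0 ∧
            ((Bmat n (1 / τ + τ / β) τ β).map (Complex.ofReal)).mulVec v = lam • v) →
        ((β / τ ^ 2 : ℝ) : ℂ) +
            ∑ l ∈ Finset.range (n + 1), (1 / (1 - (τ : ℂ) * lam)) ^ (l + 1) = 0) ∧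
      (∀ μ : ℂ,
        ((β / τ ^ 2 : ℝ) : ℂ) + ∑ l ∈ Finset.range (n + 1), μ ^ (l + 1) = 0 →
        ∃ v : Fin (n + 1) → ℂ, v ≠ 0 ∧
          ((Bmat n (1 / τ + τ / β) τ β).map (Complex.ofReal)).mulVec v =
            ((1 - 1 / μ) / (τ : ℂ)) • v) := by
  have hτ0 : (τ : ℂ) ≠ 0 := Complex.ofReal_ne_zero.mpr hτ.ne'
  have hβ0 : (β : ℂ) ≠ 0 := Complex.ofReal_ne_zero.mpr hβ.ne'
  have hτinv : (τ:ℂ) * (1/τ) = 1 := by field_simp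
  have hβinv : (β:ℂ) * (1/β) = 1 := by field_simp
  have hτ2inv : (τ:ℂ)^2 * ((τ:ℂ)^2)⁻¹ = 1 := mul_inv_cancel₀ (pow_ne_zero 2 hτ0)
  constructor
  · rintro lam ⟨v, hv, heig⟩
    have hrow : ∀ i, ((Bmat n (1/τ+τ/β) τ β).map Complex.ofReal).mulVec v i = lam * v i := by
      intro i; rw [heig]; simp
    have E0 : ((1/τ+τ/β : ℝ):ℂ) * v 0 + ((1/β:ℝ):ℂ) * v ⟨n, n.lt_succ_self⟩ = lam * v 0 := by
      rw [← row0 n hn _ τ β v]; exact hrow 0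
    push_cast at E0
    have E0' : (β:ℂ) * v 0 + (τ:ℂ)^2 * v 0 + (τ:ℂ) * v ⟨n, n.lt_succ_self⟩
        = (τ:ℂ) * (β:ℂ) * lam * v 0 := by
      linear_combination (τ:ℂ)*(β:ℂ)*E0 - (β:ℂ)*(v 0)*hτinv
        - ((τ:ℂ)^2*(v 0) + (τ:ℂ)*(v ⟨n, n.lt_succ_self⟩))*hβinv
    have ES' : ∀ k (hk : k < n+1) (hk0 : k ≠ 0),
        (1 - (τ:ℂ)*lam) * v ⟨k, hk⟩ =
          (τ:ℂ) * v 0 + (if 2 ≤ k then v ⟨k - 1, by omega⟩ else 0) := by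
      intro k hk hk0
      have E := hrow ⟨k, hk⟩
      rw [rowS n _ τ β v k hk hk0] at E
      push_cast at E
      by_cases h2 : 2 ≤ k
      · rw [if_pos h2] at E ⊢
        linear_combination (τ:ℂ)*E + (v ⟨k-1, by omega⟩ - v ⟨k, hk⟩)*hτinv
      · rw [if_neg h2] at E ⊢
        linear_combination (τ:ℂ)*E - v ⟨k, hk⟩*hτinv
    by_cases hden : (1 : ℂ) - (τ:ℂ) * lam = 0
    · exfalso; apply hv
      have hv0 : v 0 = 0 := by
        have E := ES' 1 (by omega) one_ne_zero
        rw [hden, if_neg (by norm_num)] at E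
        have : (τ:ℂ) * v 0 = 0 := by linear_combination -E
        exact ((mul_eq_zero.mp this).resolve_left hτ0)
      have hvlast : v ⟨n, n.lt_succ_self⟩ = 0 := by
        have : (τ:ℂ) * v ⟨n, n.lt_succ_self⟩ = 0 := by
          linear_combination E0' - ((β:ℂ) + (τ:ℂ)^2 - (τ:ℂ)*(β:ℂ)*lam) * hv0
        exact ((mul_eq_zero.mp this).resolve_left hτ0)
      have hmid : ∀ k (hk : k < n+1), k ≠ 0 → k ≠ n → v ⟨k, hk⟩ = 0 := by
        intro k hk hk0 hkn
        have E := ES' (k+1) (by omega) (by omega)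
        rw [hden, if_pos (by omega)] at E
        have hidx : (⟨k+1-1, by omega⟩ : Fin (n+1)) = ⟨k, hk⟩ := by
          ext; simp
        rw [hidx, hv0] at E
        linear_combination -E
      funext i
      show v i = 0
      by_cases hi0 : (i:ℕ) = 0
      · have : i = 0 := Fin.ext hi0
        rw [this]; exact hv0
      · by_cases hin : (i:ℕ) = n
        · have : i = ⟨n, n.lt_succ_self⟩ := Fin.ext hin
          rw [this]; exact hvlast
        · have : i = ⟨(i:ℕ), i.isLt⟩ := by ext; rfl
          rw [this]; exact hmid (i:ℕ) i.isLt hi0 hin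
    · set μ : ℂ := 1 / (1 - (τ:ℂ)*lam) with hμdef
      have hμ : (1 - (τ:ℂ)*lam) * μ = 1 := by
        rw [hμdef]; field_simp
      have key : ∀ k (hk : k + 1 < n + 1),
          v ⟨k+1, hk⟩ = (τ:ℂ) * v 0 * ∑ l ∈ Finset.range (k+1), μ^(l+1) := by
        intro k
        induction k with
        | zero =>
          intro hk
          have E := ES' 1 hk one_ne_zero
          rw [if_neg (by norm_num)] at E
          rw [Finset.sum_range_one]
          norm_num
          linear_combination μ*E - v ⟨1, hk⟩*hμ
        | succ m ih =>
          intro hk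
          have E := ES' (m+2) hk (by omega)
          rw [if_pos (by omega)] at E
          have hidx : (⟨m+2-1, by omega⟩ : Fin (n+1)) = ⟨m+1, by omega⟩ := by
            ext; simp
          rw [hidx] at E
          have ihm := ih (by omega)
          rw [Ssucc]
          linear_combination μ*E - v ⟨m+2, hk⟩*hμ + μ*ihm
      have hv00 : v 0 ≠ 0 := by
        intro h
        apply hv
        funext i
        show v i = 0
        by_cases hi0 : (i:ℕ) = 0
        · have : i = 0 := Fin.ext hi0
          rw [this]; exact h
        · have hidx : i = ⟨((i:ℕ)-1)+1, by omega⟩ := by ext; simp; omega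
          rw [hidx, key ((i:ℕ)-1) (by omega), h]
          ring
      have hvn : v ⟨n, n.lt_succ_self⟩ = (τ:ℂ) * v 0 * ∑ l ∈ Finset.range n, μ^(l+1) := by
        have hidx : (⟨n, n.lt_succ_self⟩ : Fin (n+1)) = ⟨(n-1)+1, by omega⟩ := by
          simp only [Fin.ext_iff, Fin.val_mk]; omega
        rw [hidx, key (n-1) (by omega), Nat.sub_add_cancel hn]
      have hmain : v 0 * ((β:ℂ) + (τ:ℂ)^2*μ*(1 + ∑ l ∈ Finset.range n, μ^(l+1))) = 0 := by
        rw [hvn] at E0'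
        linear_combination μ*E0' - (β:ℂ)*(v 0)*hμ
      have h2 : (β:ℂ) + (τ:ℂ)^2*μ*(1 + ∑ l ∈ Finset.range n, μ^(l+1)) = 0 :=
        (mul_eq_zero.mp hmain).resolve_left hv00
      push_cast
      rw [Ssucc]
      linear_combination ((τ:ℂ)^2)⁻¹ * h2 - μ*(1 + ∑ l ∈ Finset.range n, μ^(l+1))*hτ2inv
  · intro μ hroot
    have hμ0 : μ ≠ 0 := by
      intro h
      rw [h] at hroot
      simp [hβ.ne', hτ.ne'] at hroot
    push_cast at hroot
    rw [Ssucc] at hroot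
    have hroot' : (β:ℂ) + (τ:ℂ)^2*μ*(1 + ∑ l ∈ Finset.range n, μ^(l+1)) = 0 := by
      linear_combination (τ:ℂ)^2*hroot - (β:ℂ)*hτ2inv
    set S : ℕ → ℂ := fun k => ∑ l ∈ Finset.range k, μ^(l+1) with hS
    have hroot'' : (β:ℂ) + (τ:ℂ)^2*μ*(1 + S n) = 0 := hroot'
    refine ⟨fun i => if (i:ℕ) = 0 then (1:ℂ) else (τ:ℂ) * S (i:ℕ), ?_, ?_⟩
    · intro h
      have := congrFun h 0
      simp at this
    · funext i
      rw [Pi.smul_apply, smul_eq_mul]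
      by_cases hi0 : (i:ℕ) = 0
      · have hi : i = 0 := Fin.ext hi0
        rw [hi, row0 n hn _ τ β]
        simp only [Fin.val_zero, if_pos rfl, if_neg (by omega : ¬ n = 0)]
        push_cast
        field_simp
        linear_combination hroot''
      · have hi : i = ⟨(i:ℕ), i.isLt⟩ := by ext; rfl
        rw [hi, rowS n _ τ β _ (i:ℕ) i.isLt hi0]
        simp only [Fin.val_zero, if_pos rfl, if_neg hi0]
        by_cases h2 : 2 ≤ (i:ℕ)
        · rw [if_pos h2]
          simp only [if_neg (by omega : ¬ (i:ℕ) - 1 = 0)]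
          have hSi : S (i:ℕ) = μ * (1 + S ((i:ℕ)-1)) := by
            show (∑ l ∈ Finset.range (i:ℕ), μ^(l+1))
              = μ * (1 + ∑ l ∈ Finset.range ((i:ℕ)-1), μ^(l+1))
            have h' : (i:ℕ) = ((i:ℕ)-1)+1 := by omega
            conv_lhs => rw [h']
            rw [Ssucc]
          push_cast
          field_simp
          linear_combination hSi
        · have hi1 : (i:ℕ) = 1 := by omega
          rw [if_neg h2]
          have hS1 : S (i:ℕ) = μ := by
            show (∑ l ∈ Finset.range (i:ℕ), μ^(l+1)) = μ
            conv_lhs => rw [hi1]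
            rw [Finset.sum_range_one]; norm_num
          push_cast
          rw [hS1]
          field_simp
          ring
end

section
/- If α = 1/τ + τ/β and c = β/τ² > 1, then the matrix B (the time-discretization matrix of the parameterized quasi-boundary value method) has n+1 distinct eigenvalues, and hence is diagonalizable. -/
open Polynomial Finset

private lemma sum_two {m : ℕ} (f : Fin m → ℂ) (a b : Fin m) (hab : a ≠ b)
    (h : ∀ j, j ≠ a → j ≠ b → f j = 0) : ∑ j, f j = f a + f b := by
  classical
  rw [← Finset.add_sum_erase _ f (Finset.mem_univ a)]
  congr 1
  rw [← Finset.add_sum_erase _ f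
    (Finset.mem_erase.mpr ⟨Ne.symm hab, Finset.mem_univ b⟩)]
  have hz : ∑ x ∈ (Finset.univ.erase a).erase b, f x = 0 := by
    apply Finset.sum_eq_zero
    intro x hx
    rw [Finset.mem_erase, Finset.mem_erase] at hx
    exact h x hx.2.1 hx.1
  rw [hz, add_zero]

private lemma sum_three {m : ℕ} (f : Fin m → ℂ) (a b c : Fin m) (hab : a ≠ b)
    (hac : a ≠ c) (hbc : b ≠ c)
    (h : ∀ j, j ≠ a → j ≠ b → j ≠ c → f j = 0) : ∑ j, f j = f a + f b + f c := by
  classical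
  rw [← Finset.add_sum_erase _ f (Finset.mem_univ a), add_assoc]
  congr 1
  rw [← Finset.add_sum_erase _ f
    (Finset.mem_erase.mpr ⟨Ne.symm hab, Finset.mem_univ b⟩)]
  congr 1
  rw [← Finset.add_sum_erase _ f (Finset.mem_erase.mpr ⟨Ne.symm hbc,
    Finset.mem_erase.mpr ⟨Ne.symm hac, Finset.mem_univ c⟩⟩)]
  have hz : ∑ x ∈ ((Finset.univ.erase a).erase b).erase c, f x = 0 := by
    apply Finset.sum_eq_zero
    intro x hx
    rw [Finset.mem_erase, Finset.mem_erase, Finset.mem_erase] at hx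
    exact h x hx.2.2.1 hx.2.1 hx.1
  rw [hz, add_zero]

private theorem aux_sep (n : ℕ) (c : ℝ) (hc : 1 < c) :
    Separable ((X:ℂ[X])^(n+2) + C ((c:ℂ) - 1) * X - C (c:ℂ)) := by
  have hrmonic : ((X:ℂ[X])^(n+2) + C ((c:ℂ) - 1) * X - C (c:ℂ)).Monic := by
    have hd : ((C ((c:ℂ)-1) * X - C (c:ℂ) : ℂ[X])).degree < ((n+2 : ℕ) : WithBot ℕ) := by
      have h1 : ((C ((c:ℂ)-1) * X - C (c:ℂ) : ℂ[X])).degree ≤ 1 := by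
        rw [sub_eq_add_neg, ← C_neg]
        exact degree_linear_le
      exact lt_of_le_of_lt h1 (by exact_mod_cast (by omega : (1:ℕ) < n+2))
    have := monic_X_pow_add hd
    simpa [add_sub_assoc] using this
  rw [separable_def]
  by_contra hcop
  rw [← EuclideanDomain.gcd_isUnit_iff] at hcop
  have hr0 : ((X:ℂ[X])^(n+2) + C ((c:ℂ) - 1) * X - C (c:ℂ)) ≠ 0 := hrmonic.ne_zero
  have hg0 : EuclideanDomain.gcd ((X:ℂ[X])^(n+2) + C ((c:ℂ) - 1) * X - C (c:ℂ))
      (derivative ((X:ℂ[X])^(n+2) + C ((c:ℂ) - 1) * X - C (c:ℂ))) ≠ 0 := by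
    intro h
    exact hr0 (EuclideanDomain.gcd_eq_zero_iff.mp h).1
  have hdeg : 0 < (EuclideanDomain.gcd ((X:ℂ[X])^(n+2) + C ((c:ℂ) - 1) * X - C (c:ℂ))
      (derivative ((X:ℂ[X])^(n+2) + C ((c:ℂ) - 1) * X - C (c:ℂ)))).degree := by
    rcases lt_or_eq_of_le (Polynomial.zero_le_degree_iff.mpr hg0) with h | h
    · exact h
    · exact absurd (Polynomial.isUnit_iff_degree_eq_zero.mpr h.symm) hcop
  obtain ⟨z, hz⟩ := Complex.exists_root hdeg
  have hzr : ((X:ℂ[X])^(n+2) + C ((c:ℂ) - 1) * X - C (c:ℂ)).IsRoot z :=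
    hz.dvd (EuclideanDomain.gcd_dvd_left _ _)
  have hzr'0 : (derivative ((X:ℂ[X])^(n+2) + C ((c:ℂ) - 1) * X - C (c:ℂ))).IsRoot z :=
    hz.dvd (EuclideanDomain.gcd_dvd_right _ _)
  have hder : derivative ((X:ℂ[X])^(n+2) + C ((c:ℂ) - 1) * X - C (c:ℂ))
      = C ((n:ℂ)+2) * X^(n+1) + C ((c:ℂ) - 1) := by
    simp only [derivative_sub, derivative_add, derivative_X_pow, derivative_C,
      derivative_C_mul, derivative_X, mul_one, sub_zero]
    push_cast
    ring_nf
  rw [hder] at hzr'0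
  simp only [IsRoot, eval_add, eval_mul, eval_pow, eval_C, eval_X, eval_sub] at hzr hzr'0
  have hzr' : ((n:ℂ)+2) * z ^ (n+1) + ((c:ℂ) - 1) = 0 := hzr'0
  have hn2 : ((n:ℂ)+2) ≠ 0 := by
    intro h
    have : ((n:ℝ)+2) = 0 := by exact_mod_cast congrArg Complex.re h
    nlinarith [Nat.cast_nonneg (α := ℝ) n]
  have hc1 : (c:ℝ) - 1 > 0 := by linarith
  have hz1 : z * (((c:ℂ)-1) * ((n:ℂ)+1)) = (c:ℂ) * ((n:ℂ)+2) := by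
    linear_combination ((n:ℂ)+2) * hzr - z * hzr'
  have ht0 : 0 < c*(n+2)/((c-1)*(n+1)) := by
    apply div_pos (by nlinarith [Nat.cast_nonneg (α := ℝ) n])
      (by nlinarith [Nat.cast_nonneg (α := ℝ) n])
  have hden : (((c:ℂ)-1) * ((n:ℂ)+1)) ≠ 0 := by
    apply mul_ne_zero
    · intro h
      have : (c:ℝ) - 1 = 0 := by exact_mod_cast congrArg Complex.re h
      linarith
    · intro h
      have : ((n:ℝ)+1) = 0 := by exact_mod_cast congrArg Complex.re h
      nlinarith [Nat.cast_nonneg (α := ℝ) n]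
  have hzt : z = ((c*(n+2)/((c-1)*(n+1)) : ℝ) : ℂ) := by
    push_cast
    rw [eq_div_iff hden]
    linear_combination hz1
  have hfin : ((( (n:ℝ)+2)*(c*(n+2)/((c-1)*(n+1)))^(n+1) + (c-1) : ℝ) : ℂ) = 0 := by
    rw [hzt] at hzr'
    push_cast at hzr' ⊢
    linear_combination hzr'
  have hfin' : ((n:ℝ)+2)*(c*(n+2)/((c-1)*(n+1)))^(n+1) + (c-1) = 0 := by exact_mod_cast hfin
  nlinarith [pow_pos ht0 (n+1), Nat.cast_nonneg (α := ℝ) n]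

private theorem aux_roots (n : ℕ) (c : ℝ) (hc : 1 < c) :
    ∃ μ : Fin (n+1) → ℂ, Function.Injective μ ∧
      ∀ k, μ k ≠ 0 ∧ μ k * (∑ t ∈ Finset.range (n+1), μ k ^ t) = -(c:ℂ) := by
  classical
  set q : ℂ[X] := X * (∑ i ∈ Finset.range (n+1), (X:ℂ[X])^i) + C (c:ℂ) with hqdef
  have hfac : (X - 1) * q = (X:ℂ[X])^(n+2) + C ((c:ℂ) - 1) * X - C (c:ℂ) := by
    have h := geom_sum_mul (X : ℂ[X]) (n+1)
    have h1 : (C ((c:ℂ)-1) : ℂ[X]) = C (c:ℂ) - 1 := by simp [map_sub]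
    rw [hqdef, h1]
    linear_combination (X : ℂ[X]) * h
  have hqsep : q.Separable := by
    refine (aux_sep n c hc).of_dvd ⟨X - 1, ?_⟩
    rw [← hfac]; ring
  have hrdeg : ((X:ℂ[X])^(n+2) + C ((c:ℂ) - 1) * X - C (c:ℂ)).degree
      = ((n+2 : ℕ) : WithBot ℕ) := by
    rw [add_sub_assoc]
    rw [degree_add_eq_left_of_degree_lt, degree_X_pow]
    rw [degree_X_pow]
    have h1 : ((C ((c:ℂ)-1) * X - C (c:ℂ) : ℂ[X])).degree ≤ 1 := by
      rw [sub_eq_add_neg, ← C_neg]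
      exact degree_linear_le
    exact lt_of_le_of_lt h1 (by exact_mod_cast (by omega : (1:ℕ) < n+2))
  have hr0 : ((X:ℂ[X])^(n+2) + C ((c:ℂ) - 1) * X - C (c:ℂ)) ≠ 0 := by
    intro h
    rw [h, degree_zero] at hrdeg
    exact absurd hrdeg.symm (by simp)
  have hq0 : q ≠ 0 := by
    intro h
    apply hr0
    rw [← hfac, h, mul_zero]
  have hqdeg : q.natDegree = n + 1 := by
    have h2 : ((X:ℂ[X]) - 1) ≠ 0 := by
      have := X_sub_C_ne_zero (1 : ℂ); simpa using this
    have hmul := Polynomial.natDegree_mul h2 hq0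
    rw [hfac] at hmul
    have h3 : ((X:ℂ[X]) - 1).natDegree = 1 := by
      have := natDegree_X_sub_C (1 : ℂ); simpa using this
    rw [natDegree_eq_of_degree_eq_some hrdeg, h3] at hmul
    omega
  have hcard : q.roots.card = n + 1 := by
    rw [splits_iff_card_roots.mp (IsAlgClosed.splits q), hqdeg]
  have hnodup : q.roots.Nodup := Polynomial.nodup_roots hqsep
  have hfin : q.roots.toFinset.card = n + 1 := by
    rw [Multiset.toFinset_card_of_nodup hnodup, hcard]
  have hfc : Fintype.card ↥(q.roots.toFinset) = n + 1 := by
    rw [Fintype.card_coe, hfin]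
  let e := Fintype.equivFinOfCardEq hfc
  refine ⟨fun k => ((e.symm k : ↥(q.roots.toFinset)) : ℂ), ?_, ?_⟩
  · intro a b h
    exact e.symm.injective (Subtype.ext h)
  · intro k
    have hmem : ((e.symm k : ↥(q.roots.toFinset)) : ℂ) ∈ q.roots :=
      Multiset.mem_toFinset.mp (e.symm k).2
    have hroot : q.IsRoot _ := isRoot_of_mem_roots hmem
    set z : ℂ := ((e.symm k : ↥(q.roots.toFinset)) : ℂ) with hzdef
    have heval : z * (∑ t ∈ Finset.range (n+1), z ^ t) + (c:ℂ) = 0 := by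
      have := hroot
      rw [hqdef] at this
      simpa [IsRoot, eval_geom_sum] using this
    show z ≠ 0 ∧ z * (∑ t ∈ Finset.range (n+1), z ^ t) = -(c:ℂ)
    constructor
    · intro h
      rw [h] at heval
      simp at heval
      have : (c:ℝ) = 0 := by exact_mod_cast heval
      linarith
    · linear_combination heval

/-- If `α = 1/τ + τ/β` and `c = β/τ² > 1`, then `B` has `n+1` distinct (complex)
eigenvalues and hence is diagonalizable. -/
theorem stmt11 (n : ℕ) (hn : 1 ≤ n) (τ β : ℝ) (hτ : 0 < τ) (hβ : 0 < β)
    (hc : 1 < β / τ ^ 2) :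
    ∃ (d : Fin (n + 1) → ℂ) (P : Matrix (Fin (n + 1)) (Fin (n + 1)) ℂ),
      Function.Injective d ∧ IsUnit P.det ∧
      (∀ k, ∃ v : Fin (n + 1) → ℂ, v ≠ 0 ∧
        ((Bmat n (1 / τ + τ / β) τ β).map (Complex.ofReal)).mulVec v = d k • v) ∧
      (Bmat n (1 / τ + τ / β) τ β).map (Complex.ofReal) = P * Matrix.diagonal d * P⁻¹ := by
  classical
  obtain ⟨μ, hμinj, hμ⟩ := aux_roots n (β / τ ^ 2) hc
  have hτ0 : (τ:ℂ) ≠ 0 := Complex.ofReal_ne_zero.mpr (ne_of_gt hτ)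
  have hβ0 : (β:ℂ) ≠ 0 := Complex.ofReal_ne_zero.mpr (ne_of_gt hβ)
  set A : Matrix (Fin (n+1)) (Fin (n+1)) ℂ :=
    (Bmat n (1 / τ + τ / β) τ β).map (Complex.ofReal) with hA
  set d : Fin (n+1) → ℂ := fun k => (1 - (μ k)⁻¹) / (τ:ℂ) with hd
  have hdinj : Function.Injective d := by
    intro a b h
    apply hμinj
    simp only [hd] at h
    rw [div_eq_div_iff hτ0 hτ0] at h
    have h1 := mul_right_cancel₀ hτ0 h
    have h2 : (μ a)⁻¹ = (μ b)⁻¹ := by linear_combination -h1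
    exact inv_injective h2
  set v : Fin (n+1) → Fin (n+1) → ℂ := fun k i =>
    if (i:ℕ) = 0 then 1 else (τ:ℂ) * (μ k * ∑ t ∈ Finset.range (i:ℕ), μ k ^ t) with hv
  have hvne : ∀ k, v k ≠ 0 := by
    intro k h
    have := congrFun h ⟨0, by omega⟩
    simp [hv] at this
  have hn0 : n ≠ 0 := by omega
  have hmulvec : ∀ k, A.mulVec (v k) = d k • v k := by
    intro k
    obtain ⟨hz0, hkey⟩ := hμ k
    funext i
    simp only [Matrix.mulVec, dotProduct, Pi.smul_apply, smul_eq_mul]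
    by_cases hi : (i:ℕ) = 0
    · -- first row
      have hb : (0 : Fin (n+1)) ≠ (⟨n, by omega⟩ : Fin (n+1)) := by
        intro h
        have := congrArg Fin.val h
        simp at this
        omega
      have hside : ∀ j, j ≠ (0 : Fin (n+1)) → j ≠ (⟨n, by omega⟩ : Fin (n+1)) →
          A i j * v k j = 0 := by
        intro j hj0 hjn
        have hj0' : (j:ℕ) ≠ 0 := fun h => hj0 (Fin.ext (by simpa using h))
        have hjn' : (j:ℕ) ≠ n := fun h => hjn (Fin.ext (by simpa using h))
        simp [hA, Bmat, Matrix.map_apply, hi, hj0', hjn']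
      rw [sum_two (fun j => A i j * v k j) 0 ⟨n, by omega⟩ hb hside]
      have e0 : A i (0 : Fin (n+1)) = ((1/τ + τ/β : ℝ) : ℂ) := by
        simp [hA, Bmat, Matrix.map_apply, hi]
      have en : A i (⟨n, by omega⟩ : Fin (n+1)) = ((1/β : ℝ) : ℂ) := by
        simp [hA, Bmat, Matrix.map_apply, hi, hn0]
      have ev0 : v k (0 : Fin (n+1)) = 1 := by simp [hv]
      have evn : v k (⟨n, by omega⟩ : Fin (n+1))
          = (τ:ℂ) * (μ k * ∑ t ∈ Finset.range n, μ k ^ t) := by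
        simp [hv, hn0]
      have evi : v k i = 1 := by simp only [hv]; rw [if_pos hi]
      have edk : d k = (1 - (μ k)⁻¹) / (τ:ℂ) := rfl
      rw [e0, en, ev0, evn, evi, edk]
      have hkey2 : μ k * (μ k * (∑ t ∈ Finset.range n, μ k ^ t) + 1)
          = -((β:ℂ) / (τ:ℂ)^2) := by
        rw [geom_sum_succ] at hkey
        rw [hkey]
        push_cast
        ring
      field_simp at hkey2
      push_cast
      field_simp
      linear_combination hkey2
    · -- other rows
      by_cases hm1 : (i:ℕ) = 1
      · have hb : (0 : Fin (n+1)) ≠ i := by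
          intro h
          have := congrArg Fin.val h
          simp [hm1] at this
        have hside : ∀ j, j ≠ (0 : Fin (n+1)) → j ≠ i → A i j * v k j = 0 := by
          intro j hj0 hji
          have hj0' : (j:ℕ) ≠ 0 := fun h => hj0 (Fin.ext (by simpa using h))
          have hjp : (j:ℕ) + 1 ≠ (i:ℕ) := by
            rw [hm1]; omega
          simp [hA, Bmat, Matrix.map_apply, hi, hj0', hji, hjp]
        rw [sum_two (fun j => A i j * v k j) 0 i hb hside]
        have e0 : A i (0 : Fin (n+1)) = ((-1 : ℝ) : ℂ) := by
          simp [hA, Bmat, Matrix.map_apply, hi]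
        have ei : A i i = ((1/τ : ℝ) : ℂ) := by
          simp [hA, Bmat, Matrix.map_apply, hi]
        have ev0 : v k (0 : Fin (n+1)) = 1 := by simp [hv]
        have evi : v k i = (τ:ℂ) * (μ k * 1) := by
          simp only [hv, hm1]
          rw [if_neg (by omega : ¬ ((1:ℕ) = 0)), Finset.sum_range_one, pow_zero]
        have edk : d k = (1 - (μ k)⁻¹) / (τ:ℂ) := rfl
        rw [e0, ei, ev0, evi, edk]
        push_cast
        field_simp
        ring
      · obtain ⟨m', hi2⟩ : ∃ m', (i:ℕ) = m' + 2 := ⟨(i:ℕ) - 2, by omega⟩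
        have hiplt : m' + 1 < n + 1 := by
          have := i.isLt
          omega
        have h0ip : (0 : Fin (n+1)) ≠ (⟨m'+1, hiplt⟩ : Fin (n+1)) := by
          intro h
          have := congrArg Fin.val h
          simp at this
        have h0i : (0 : Fin (n+1)) ≠ i := by
          intro h
          have := congrArg Fin.val h
          simp at this
          omega
        have hipi : (⟨m'+1, hiplt⟩ : Fin (n+1)) ≠ i := by
          intro h
          have := congrArg Fin.val h
          simp [hi2] at this
        have hside : ∀ j, j ≠ (0 : Fin (n+1)) → j ≠ (⟨m'+1, hiplt⟩ : Fin (n+1)) →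
            j ≠ i → A i j * v k j = 0 := by
          intro j hj0 hjip hji
          have hj0' : (j:ℕ) ≠ 0 := fun h => hj0 (Fin.ext (by simpa using h))
          have hjp : (j:ℕ) + 1 ≠ (i:ℕ) := by
            intro h
            apply hjip
            apply Fin.ext
            simp
            omega
          simp [hA, Bmat, Matrix.map_apply, hi, hj0', hji, hjp]
        rw [sum_three (fun j => A i j * v k j) 0 ⟨m'+1, hiplt⟩ i h0ip h0i hipi hside]
        have e0 : A i (0 : Fin (n+1)) = ((-1 : ℝ) : ℂ) := by
          simp [hA, Bmat, Matrix.map_apply, hi]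
        have eip : A i (⟨m'+1, hiplt⟩ : Fin (n+1)) = ((-1/τ : ℝ) : ℂ) := by
          simp [hA, Bmat, Matrix.map_apply, hi, hipi, hi2]
        have ei : A i i = ((1/τ : ℝ) : ℂ) := by
          simp [hA, Bmat, Matrix.map_apply, hi]
        have ev0 : v k (0 : Fin (n+1)) = 1 := by simp [hv]
        have hs := Finset.sum_range_succ (fun t => μ k ^ t) (m'+1)
        have evip : v k (⟨m'+1, hiplt⟩ : Fin (n+1))
            = (τ:ℂ) * (μ k * ∑ t ∈ Finset.range (m'+1), μ k ^ t) := by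
          simp [hv]
        have evi : v k i = (τ:ℂ) * (μ k * ((∑ t ∈ Finset.range (m'+1), μ k ^ t)
            + μ k ^ (m'+1))) := by
          simp only [hv, hi2]
          rw [if_neg (by omega : ¬ (m' + 2 = 0)),
            show m' + 2 = m' + 1 + 1 from rfl, Finset.sum_range_succ]
        have edk : d k = (1 - (μ k)⁻¹) / (τ:ℂ) := rfl
        rw [e0, eip, ei, ev0, evip, evi, edk]
        have hg := geom_sum_mul (μ k) (m'+2)
        rw [hs] at hg
        push_cast
        field_simp
        linear_combination (-1 : ℂ) * hg
  set P : Matrix (Fin (n+1)) (Fin (n+1)) ℂ := Matrix.of fun i k => v k i with hP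
  have hAP : A * P = P * Matrix.diagonal d := by
    ext i k
    have h1 : (A * P) i k = A.mulVec (v k) i := by
      simp [Matrix.mul_apply, Matrix.mulVec, dotProduct, hP]
    rw [h1, hmulvec k]
    simp [Matrix.mul_diagonal, hP, Pi.smul_apply, smul_eq_mul]
    ring
  have hli : LinearIndependent ℂ v := by
    apply Module.End.eigenvectors_linearIndependent' (Matrix.mulVecLin A) d hdinj
    intro k
    rw [Module.End.hasEigenvector_iff]
    refine ⟨Module.End.mem_eigenspace_iff.mpr ?_, hvne k⟩
    simpa [Matrix.mulVecLin_apply] using hmulvec k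
  have hcards : Fintype.card (Fin (n+1)) = Module.finrank ℂ (Fin (n+1) → ℂ) := by
    simp
  let b := basisOfLinearIndependentOfCardEqFinrank hli hcards
  have hbv : ⇑b = v := coe_basisOfLinearIndependentOfCardEqFinrank hli hcards
  have hinv : Invertible ((Pi.basisFun ℂ (Fin (n+1))).toMatrix ⇑b) :=
    (Pi.basisFun ℂ (Fin (n+1))).invertibleToMatrix b
  have hPm : (Pi.basisFun ℂ (Fin (n+1))).toMatrix ⇑b = P := by
    ext i k
    rw [Module.Basis.toMatrix_apply, hbv]
    simp [hP]
  have hPdet : IsUnit P.det := by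
    rw [← hPm]
    exact Matrix.isUnit_det_of_invertible _
  refine ⟨d, P, hdinj, hPdet, fun k => ⟨v k, hvne k, hmulvec k⟩, ?_⟩
  calc A = A * (P * P⁻¹) := by rw [Matrix.mul_nonsing_inv P hPdet, Matrix.mul_one]
    _ = A * P * P⁻¹ := by rw [Matrix.mul_assoc]
    _ = P * Matrix.diagonal d * P⁻¹ := by rw [hAP]
end

section
/- Let c > 1 and let λ be an eigenvalue of B with α = 1/τ + τ/β, c = β/τ². Then |τλ − 1| ∈ ((2c−1)^{−1/(n+1)}, 1). -/
set_option maxHeartbeats 1000000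


lemma keyBounds (c : ℝ) (hc : 1 < c) (N : ℕ) (s : ℂ)
    (h : (c : ℂ) * s ^ (N + 1) + ∑ j ∈ Finset.range (N + 1), s ^ j = 0) :
    (2 * c - 1) ^ (-(1 / ((N : ℝ) + 1))) < ‖s‖ ∧ ‖s‖ < 1 := by
  have key : s ^ (N + 1) * ((c : ℂ) * s - ((c : ℂ) - 1)) = 1 := by
    have gsm := geom_sum_mul s (N + 1)
    linear_combination (s - 1) * h - gsm
  have hs1 : s ≠ 1 := by
    intro hs
    subst hs
    simp at h
    have := congrArg Complex.re h
    simp at this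
    push_cast at this
    linarith
  have hs0 : s ≠ 0 := by
    intro hs
    subst hs
    simp [pow_succ] at key
  have hne : (c : ℂ) * s - ((c : ℂ) - 1) ≠ 0 := by
    intro h0
    rw [h0, mul_zero] at key
    exact one_ne_zero key.symm
  set r := ‖s‖ with hr
  have hrpos : 0 < r := norm_pos_iff.mpr hs0
  have habs : r ^ (N + 1) * ‖(c : ℂ) * s - ((c : ℂ) - 1)‖ = 1 := by
    rw [hr, ← norm_pow, ← norm_mul, key, norm_one]
  set A := ‖(c : ℂ) * s - ((c : ℂ) - 1)‖ with hA
  have hApos : 0 < A := norm_pos_iff.mpr hne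
  have hAsq : A ^ 2 = (c * s.re - (c - 1)) ^ 2 + (c * s.im) ^ 2 := by
    rw [hA, Complex.sq_norm, Complex.normSq_apply]
    simp [Complex.sub_re, Complex.mul_re, Complex.sub_im, Complex.mul_im]
    ring
  have hrsq : r ^ 2 = s.re ^ 2 + s.im ^ 2 := by
    rw [hr, Complex.sq_norm, Complex.normSq_apply]; ring
  have hxr : s.re ≤ r := Complex.re_le_norm s
  -- upper bound
  have hupper : r < 1 := by
    by_contra hge
    push_neg at hge
    have hrN : 1 ≤ r ^ (N + 1) := one_le_pow₀ hge
    have hA1 : A ≤ 1 := by nlinarith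
    have hA2 : A ^ 2 ≤ 1 := by nlinarith
    have e2 : A ^ 2 = (c * r - (c - 1)) ^ 2 + 2 * c * (c - 1) * (r - s.re) := by
      linear_combination hAsq - c ^ 2 * hrsq
    have hcr1 : 1 ≤ c * r - (c - 1) := by nlinarith
    have ht1 : 1 ≤ (c * r - (c - 1)) ^ 2 := by nlinarith [sq_nonneg (c * r - (c - 1) - 1)]
    have ht2 : 2 * c * (c - 1) * (r - s.re) ≤ 0 := by linarith
    have hcpos : (0 : ℝ) < 2 * c * (c - 1) := by nlinarith
    have hxr' : r ≤ s.re := by nlinarith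
    have hxeq : s.re = r := le_antisymm hxr hxr'
    have e3 : (c * r - (c - 1)) ^ 2 = A ^ 2 := by
      linear_combination (-1 : ℝ) * e2 + 2 * c * (c - 1) * hxeq
    have ht3 : (c * r - (c - 1)) ^ 2 ≤ 1 := by linarith
    have ht4 : c * r - (c - 1) ≤ 1 := by nlinarith [ht3, hcr1]
    have hr1 : r ≤ 1 := by nlinarith [ht4, hc]
    have hre1 : s.re = 1 := by linarith
    have hreq : r = 1 := le_antisymm hr1 hge
    have him0 : s.im = 0 := by
      have h2 : s.im ^ 2 = 0 := by
        linear_combination (-1 : ℝ) * hrsq + (r + 1) * hreq - (s.re + 1) * hre1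
      exact sq_eq_zero_iff.mp h2
    exact hs1 (Complex.ext hre1 him0)
  refine ⟨?_, hupper⟩
  -- lower bound
  have hAlt : A < 2 * c - 1 := by
    have : A ≤ c * r + (c - 1) := by
      calc A ≤ ‖(c : ℂ) * s‖ + ‖(c : ℂ) - 1‖ := by
              rw [hA]; exact norm_sub_le _ _
        _ = c * r + (c - 1) := by
              rw [norm_mul, show ((c : ℂ) - 1) = ((c - 1 : ℝ) : ℂ) by push_cast; ring,
                Complex.norm_real, Complex.norm_real, Real.norm_eq_abs, Real.norm_eq_abs,
                abs_of_pos (by linarith : (0:ℝ) < c), abs_of_pos (by linarith : (0:ℝ) < c - 1)]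
    nlinarith
  have h2c : (0 : ℝ) < 2 * c - 1 := by linarith
  have hrN : (2 * c - 1)⁻¹ < r ^ (N + 1) := by
    rw [inv_eq_one_div, div_lt_iff₀ h2c]
    nlinarith [mul_lt_mul_of_pos_left hAlt (pow_pos hrpos (N + 1))]
  apply lt_of_pow_lt_pow_left₀ (N + 1) (le_of_lt hrpos)
  have heq : ((2 * c - 1) ^ (-(1 / ((N : ℝ) + 1)))) ^ (N + 1) = (2 * c - 1)⁻¹ := by
    rw [← Real.rpow_natCast ((2 * c - 1) ^ (-(1 / ((N : ℝ) + 1)))) (N + 1),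
      ← Real.rpow_mul (le_of_lt h2c)]
    push_cast
    rw [show (-(1 / ((N : ℝ) + 1))) * ((N : ℝ) + 1) = -1 by
      field_simp]
    rw [Real.rpow_neg_one]
  rw [heq]
  exact hrN

/-- For `c = β/τ² > 1` and `α = 1/τ + τ/β`, each eigenvalue `λ` of `B` satisfies
`|τλ − 1| ∈ ((2c−1)^{−1/(n+1)}, 1)`. -/
theorem stmt12 (n : ℕ) (hn : 1 ≤ n) (τ β : ℝ) (hτ : 0 < τ) (hβ : 0 < β)
    (hc : 1 < β / τ ^ 2) (lam : ℂ)
    (hlam : ∃ v : Fin (n + 1) → ℂ, v ≠ 0 ∧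
      ((Bmat n (1 / τ + τ / β) τ β).map (Complex.ofReal)).mulVec v = lam • v) :
    (2 * (β / τ ^ 2) - 1) ^ (-(1 / ((n : ℝ) + 1))) < ‖(τ : ℂ) * lam - 1‖ ∧
      ‖(τ : ℂ) * lam - 1‖ < 1 := by
  obtain ⟨v, hv, heq⟩ := hlam
  have hτ0 : (τ : ℂ) ≠ 0 := Complex.ofReal_ne_zero.mpr (ne_of_gt hτ)
  have hβ0 : (β : ℂ) ≠ 0 := Complex.ofReal_ne_zero.mpr (ne_of_gt hβ)
  have row : ∀ i : Fin (n + 1),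
      (∑ j, (Complex.ofReal (Bmat n (1 / τ + τ / β) τ β i j)) * v j) = lam * v i := by
    intro i
    have h1 := congrFun heq i
    simpa [Matrix.mulVec, dotProduct, Matrix.map_apply] using h1
  set w : ℕ → ℂ := fun k => if h : k ≤ n then v ⟨k, Nat.lt_succ_of_le h⟩ else 0 with hw
  have hwv : ∀ (k : ℕ) (h : k ≤ n), w k = v ⟨k, Nat.lt_succ_of_le h⟩ := fun k h => dif_pos h
  -- row 0
  have E0 : ((1 / τ + τ / β : ℝ) : ℂ) * w 0 + ((1 / β : ℝ) : ℂ) * w n = lam * w 0 := by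
    have hr := row ⟨0, Nat.succ_pos n⟩
    have hsplit : ∀ j : Fin (n + 1),
        (Complex.ofReal (Bmat n (1 / τ + τ / β) τ β ⟨0, Nat.succ_pos n⟩ j)) * v j
        = (if j = (⟨0, Nat.succ_pos n⟩ : Fin (n + 1)) then ((1 / τ + τ / β : ℝ) : ℂ) * v j else 0)
          + (if j = (⟨n, Nat.lt_succ_of_le le_rfl⟩ : Fin (n + 1)) then ((1 / β : ℝ) : ℂ) * v j else 0) := by
      intro j
      rcases j with ⟨jv, hjv⟩
      simp only [Bmat, Fin.mk.injEq, Fin.ext_iff]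
      split_ifs <;> first | (push_cast; ring1) | (exfalso; omega) | simp_all
    rw [Finset.sum_congr rfl (fun j _ => hsplit j), Finset.sum_add_distrib] at hr
    simp only [Finset.sum_ite_eq', Finset.mem_univ, if_true] at hr
    rw [hwv 0 (Nat.zero_le n), hwv n le_rfl]
    exact hr
  -- row 1
  have E1 : (-1 : ℂ) * w 0 + ((1 / τ : ℝ) : ℂ) * w 1 = lam * w 1 := by
    have hr := row ⟨1, by omega⟩
    have hsplit : ∀ j : Fin (n + 1),
        (Complex.ofReal (Bmat n (1 / τ + τ / β) τ β ⟨1, by omega⟩ j)) * v j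
        = (if j = (⟨0, Nat.succ_pos n⟩ : Fin (n + 1)) then (-1 : ℂ) * v j else 0)
          + (if j = (⟨1, by omega⟩ : Fin (n + 1)) then ((1 / τ : ℝ) : ℂ) * v j else 0) := by
      intro j
      rcases j with ⟨jv, hjv⟩
      simp only [Bmat, Fin.mk.injEq, Fin.ext_iff]
      split_ifs <;> first | (push_cast; ring1) | (exfalso; omega) | simp_all
    rw [Finset.sum_congr rfl (fun j _ => hsplit j), Finset.sum_add_distrib] at hr
    simp only [Finset.sum_ite_eq', Finset.mem_univ, if_true] at hr
    rw [hwv 0 (Nat.zero_le n), hwv 1 hn]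
    exact hr
  -- rows 2..n
  have Ek : ∀ k, 2 ≤ k → k ≤ n →
      (-1 : ℂ) * w 0 + ((1 / τ : ℝ) : ℂ) * w k + ((-1 / τ : ℝ) : ℂ) * w (k - 1) = lam * w k := by
    intro k hk2 hkn
    have hr := row ⟨k, by omega⟩
    have hsplit : ∀ j : Fin (n + 1),
        (Complex.ofReal (Bmat n (1 / τ + τ / β) τ β ⟨k, by omega⟩ j)) * v j
        = (if j = (⟨0, Nat.succ_pos n⟩ : Fin (n + 1)) then (-1 : ℂ) * v j else 0)
          + (if j = (⟨k, by omega⟩ : Fin (n + 1)) then ((1 / τ : ℝ) : ℂ) * v j else 0)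
          + (if j = (⟨k - 1, by omega⟩ : Fin (n + 1)) then ((-1 / τ : ℝ) : ℂ) * v j else 0) := by
      intro j
      rcases j with ⟨jv, hjv⟩
      simp only [Bmat, Fin.mk.injEq, Fin.ext_iff]
      split_ifs <;> first | (push_cast; ring1) | (exfalso; omega) | simp_all
    rw [Finset.sum_congr rfl (fun j _ => hsplit j), Finset.sum_add_distrib,
      Finset.sum_add_distrib] at hr
    simp only [Finset.sum_ite_eq', Finset.mem_univ, if_true] at hr
    rw [hwv 0 (Nat.zero_le n), hwv k hkn, hwv (k - 1) (by omega)]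
    exact hr
  -- clean forms
  set s : ℂ := 1 - (τ : ℂ) * lam with hs
  have F1 : s * w 1 = (τ : ℂ) * w 0 := by
    have h1 := E1
    push_cast at h1
    field_simp at h1
    linear_combination h1 + (w 1) * hs
  have Fk : ∀ k, 2 ≤ k → k ≤ n → s * w k = w (k - 1) + (τ : ℂ) * w 0 := by
    intro k hk2 hkn
    have h1 := Ek k hk2 hkn
    push_cast at h1
    field_simp at h1
    linear_combination h1 + (w k) * hs
  have E0' : (τ : ℂ) ^ 2 * w 0 + (β : ℂ) * s * w 0 + (τ : ℂ) * w n = 0 := by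
    have h1 := E0
    push_cast at h1
    field_simp at h1
    have hb2 : (β : ℂ) * ((τ : ℂ) ^ 2 * w 0 + (β : ℂ) * s * w 0 + (τ : ℂ) * w n) = 0 := by
      linear_combination (β : ℂ) * h1 + (β : ℂ) ^ 2 * (w 0) * hs
    exact (mul_eq_zero.mp hb2).resolve_left hβ0
  -- witness of nonvanishing
  have hvz : ∃ k, k ≤ n ∧ w k ≠ 0 := by
    obtain ⟨i, hi⟩ := Function.ne_iff.mp hv
    refine ⟨i.val, Nat.lt_succ_iff.mp i.isLt, ?_⟩
    rw [hwv i.val (Nat.lt_succ_iff.mp i.isLt)]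
    simpa using hi
  -- s ≠ 0
  have hs0 : s ≠ 0 := by
    intro h0
    obtain ⟨k, hk, hwk⟩ := hvz
    apply hwk
    have hw0 : w 0 = 0 := by
      have h2 := F1
      rw [h0, zero_mul] at h2
      exact (mul_eq_zero.mp h2.symm).resolve_left hτ0
    have hmid : ∀ m, 1 ≤ m → m ≤ n - 1 → w m = 0 := by
      intro m hm1 hmn
      have := Fk (m + 1) (by omega) (by omega)
      rw [h0, hw0] at this
      simp at this
      simpa using this.symm
    have hwn : w n = 0 := by
      have h2 := E0'
      rw [h0, hw0] at h2
      simp only [mul_zero, zero_mul, mul_zero, zero_add, add_zero] at h2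
      exact (mul_eq_zero.mp h2).resolve_left hτ0
    rcases Nat.eq_zero_or_pos k with h | h
    · rw [h]; exact hw0
    · rcases eq_or_lt_of_le hk with h' | h'
      · rw [h']; exact hwn
      · exact hmid k h (by omega)
  -- w 0 ≠ 0
  have hw0 : w 0 ≠ 0 := by
    intro h0
    obtain ⟨k, hk, hwk⟩ := hvz
    apply hwk
    clear hwk
    induction k with
    | zero => exact h0
    | succ m ih =>
      by_cases hm : m = 0
      · subst hm
        have h2 := F1
        rw [h0, mul_zero] at h2
        exact (mul_eq_zero.mp h2).resolve_left hs0
      · have hmn : m ≤ n := by omega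
        have hwm : w m = 0 := ih hmn
        have h2 := Fk (m + 1) (by omega) hk
        simp only [Nat.add_sub_cancel] at h2
        rw [h0, hwm, mul_zero, add_zero] at h2
        exact (mul_eq_zero.mp h2).resolve_left hs0
  -- geometric identity
  have G : ∀ k, 1 ≤ k → k ≤ n →
      s ^ k * w k = (τ : ℂ) * (∑ j ∈ Finset.range k, s ^ j) * w 0 := by
    intro k
    induction k with
    | zero => intro h; omega
    | succ m ih =>
      intro _ hkn
      by_cases hm : m = 0
      · subst hm
        simpa using F1
      · have hm1 : 1 ≤ m := Nat.one_le_iff_ne_zero.mpr hm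
        have hmn : m ≤ n := by omega
        have ihm := ih hm1 hmn
        have step : s * w (m + 1) = w m + (τ : ℂ) * w 0 := by
          have := Fk (m + 1) (by omega) hkn
          simpa using this
        calc s ^ (m + 1) * w (m + 1) = s ^ m * (s * w (m + 1)) := by ring
          _ = s ^ m * (w m + (τ : ℂ) * w 0) := by rw [step]
          _ = s ^ m * w m + (τ : ℂ) * s ^ m * w 0 := by ring
          _ = (τ : ℂ) * (∑ j ∈ Finset.range m, s ^ j) * w 0 + (τ : ℂ) * s ^ m * w 0 := by
              rw [ihm]
          _ = (τ : ℂ) * (∑ j ∈ Finset.range (m + 1), s ^ j) * w 0 := by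
              rw [Finset.sum_range_succ]; ring
  -- final polynomial relation
  have final : (β : ℂ) * s ^ (n + 1) + (τ : ℂ) ^ 2 * (∑ j ∈ Finset.range (n + 1), s ^ j) = 0 := by
    have Gn := G n hn le_rfl
    have rs := Finset.sum_range_succ (fun j => s ^ j) n
    have h2 : w 0 * ((β : ℂ) * s ^ (n + 1) + (τ : ℂ) ^ 2 * ∑ j ∈ Finset.range (n + 1), s ^ j) = 0 := by
      linear_combination s ^ n * E0' - (τ : ℂ) * Gn + (τ : ℂ) ^ 2 * w 0 * rs
    rcases mul_eq_zero.mp h2 with h | h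
    · exact absurd h hw0
    · exact h
  have hfinal2 : ((β / τ ^ 2 : ℝ) : ℂ) * s ^ (n + 1) + ∑ j ∈ Finset.range (n + 1), s ^ j = 0 := by
    push_cast
    have hτ2 : (τ : ℂ) ^ 2 ≠ 0 := pow_ne_zero 2 hτ0
    field_simp
    linear_combination final
  have hb := keyBounds (β / τ ^ 2) hc n s hfinal2
  have habs : ‖(τ : ℂ) * lam - 1‖ = ‖s‖ := by
    rw [show (τ : ℂ) * lam - 1 = -s by rw [hs]; ring, norm_neg]
  rw [habs]
  exact hb
end

section
/- Let B have eigenvalue λ with eigenvector v = (v₀, …, v_n)ᵀ normalized by v₀ = 1/τ, where α = 1/τ + τ/β. Then v_k = (μ^{k+1} − μ)/(μ − 1) for k = 1, …, n, where μ = 1/(1 − τλ). -/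
/-- If `B v = λ v` with `v₀ = 1/τ` and `μ = 1/(1 − τλ)`, then
`v_k = (μ^{k+1} − μ)/(μ − 1)` for `k = 1, …, n`. -/
theorem stmt13 (n : ℕ) (hn : 1 ≤ n) (τ β : ℝ) (hτ : 0 < τ) (hβ : 0 < β)
    (lam : ℂ) (v : Fin (n + 1) → ℂ)
    (hv : ((Bmat n (1 / τ + τ / β) τ β).map (Complex.ofReal)).mulVec v = lam • v)
    (hv0 : v 0 = 1 / (τ : ℂ))
    (μ : ℂ) (hμdef : μ = 1 / (1 - (τ : ℂ) * lam)) (hμ : μ ≠ 1) :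
    ∀ k : Fin (n + 1), (k : ℕ) ≠ 0 →
      v k = (μ ^ ((k : ℕ) + 1) - μ) / (μ - 1) := by
  have hτ0 : (τ : ℂ) ≠ 0 := by
    exact_mod_cast (Complex.ofReal_ne_zero.mpr hτ.ne')
  have hμ1 : μ - 1 ≠ 0 := sub_ne_zero.mpr hμ
  -- row 1 equation
  have e1 := congrFun hv ⟨1, by omega⟩
  simp only [Matrix.mulVec, dotProduct, Pi.smul_apply, smul_eq_mul] at e1
  have hs1 : ∀ j : Fin (n + 1),
      ((Bmat n (1 / τ + τ / β) τ β).map (Complex.ofReal)) ⟨1, by omega⟩ j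
        = (if j = 0 then (-1 : ℂ) else 0) + (if j = ⟨1, by omega⟩ then 1 / (τ : ℂ) else 0) := by
    intro j
    rcases j with ⟨jv, hj⟩
    simp only [Matrix.map_apply, Bmat, Fin.mk.injEq, Fin.ext_iff]
    norm_num
    split_ifs <;> simp_all
  simp only [hs1, add_mul, ite_mul, zero_mul, neg_mul, one_mul,
    Finset.sum_add_distrib, Finset.sum_ite_eq', Finset.mem_univ, if_true] at e1
  -- e1 : -v 0 + 1/τ * v ⟨1,_⟩ = lam * v ⟨1,_⟩
  rw [hv0] at e1
  field_simp at e1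
  have hne : (1 : ℂ) - (τ : ℂ) * lam ≠ 0 := by
    intro h
    have h10 : (1 : ℂ) = 0 := by
      linear_combination (-1 : ℂ) * e1 + v ⟨1, by omega⟩ * h
    exact one_ne_zero h10
  have hμ0 : μ ≠ 0 := by rw [hμdef]; exact one_div_ne_zero hne
  have hv1 : v ⟨1, by omega⟩ = μ := by
    rw [hμdef, eq_div_iff hne]
    linear_combination e1
  -- general row equation for k ≥ 2
  have erow : ∀ k : ℕ, 2 ≤ k → ∀ hk : k < n + 1,
      v ⟨k, hk⟩ * (1 - (τ : ℂ) * lam) = 1 + v ⟨k - 1, by omega⟩ := by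
    intro k hk2 hk
    have e := congrFun hv ⟨k, hk⟩
    simp only [Matrix.mulVec, dotProduct, Pi.smul_apply, smul_eq_mul] at e
    have hs : ∀ j : Fin (n + 1),
        ((Bmat n (1 / τ + τ / β) τ β).map (Complex.ofReal)) ⟨k, hk⟩ j
          = (if j = 0 then (-1 : ℂ) else 0) + (if j = ⟨k, hk⟩ then 1 / (τ : ℂ) else 0)
            + (if j = ⟨k - 1, by omega⟩ then -1 / (τ : ℂ) else 0) := by
      intro j
      rcases j with ⟨jv, hj⟩
      simp only [Matrix.map_apply, Bmat, Fin.mk.injEq, Fin.ext_iff]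
      norm_num
      split_ifs <;> simp_all <;> grind
    simp only [hs, add_mul, ite_mul, zero_mul, neg_mul, one_mul,
      Finset.sum_add_distrib, Finset.sum_ite_eq', Finset.mem_univ, if_true] at e
    rw [hv0] at e
    field_simp at e
    linear_combination e
  -- main induction
  have key : ∀ k : ℕ, 1 ≤ k → ∀ hk : k < n + 1,
      v ⟨k, hk⟩ = (μ ^ (k + 1) - μ) / (μ - 1) := by
    intro k
    induction k with
    | zero => omega
    | succ k ih =>
      intro _ hk
      rcases Nat.eq_zero_or_pos k with h1 | h2
      · subst h1
        rw [show v ⟨0 + 1, hk⟩ = μ from hv1, eq_div_iff hμ1]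
        ring
      · have hk2 : 2 ≤ k + 1 := by omega
        have e := erow (k + 1) hk2 hk
        have hprev : v ⟨k + 1 - 1, by omega⟩ = (μ ^ (k + 1) - μ) / (μ - 1) := by
          simpa using ih (by omega) (by omega)
        rw [hprev] at e
        have hμinv : μ * (1 - (τ : ℂ) * lam) = 1 := by
          rw [hμdef]; field_simp
        field_simp at e
        rw [eq_div_iff hμ1]
        linear_combination μ * e - v ⟨k + 1, hk⟩ * (μ - 1) * hμinv
  intro k hk
  have := key (k : ℕ) (Nat.one_le_iff_ne_zero.mpr hk) k.isLt
  simpa using this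
end

section
/- For each eigenvalue λ_l > 0 and parameters α, β, T > 0, the filter factor satisfies λ_l/(1 − e^{−λ_l T} + αβλ_l + βλ_l²) ≤ 1/(2√(γ₁β) + αβ), where γ₁ = 1 − e^{−λ₁T} and λ_l ≥ λ₁ > 0. -/
/-- Filter-factor bound: for eigenvalues `λ_l ≥ λ₁ > 0`, `T, α, β > 0` and
`γ₁ = 1 − e^{−λ₁T}`, one has `λ_l/(1 − e^{−λ_l T} + αβλ_l + βλ_l²) ≤ 1/(2√(γ₁β) + αβ)`. -/
theorem stmt14 (T lam lam1 α β : ℝ) (hlam1 : 0 < lam1) (hlam : lam1 ≤ lam)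
    (hT : 0 < T) (hα : 0 < α) (hβ : 0 < β) :
    lam / (1 - Real.exp (-lam * T) + α * β * lam + β * lam ^ 2) ≤
      1 / (2 * Real.sqrt ((1 - Real.exp (-lam1 * T)) * β) + α * β) := by
  have hlampos : 0 < lam := lt_of_lt_of_le hlam1 hlam
  have hγ : 0 < 1 - Real.exp (-lam1 * T) := by
    have : Real.exp (-lam1 * T) < 1 := by
      rw [Real.exp_lt_one_iff]; nlinarith
    linarith
  have hexp : Real.exp (-lam * T) ≤ Real.exp (-lam1 * T) :=
    Real.exp_le_exp.mpr (by nlinarith)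
  have hE : 0 < 1 - Real.exp (-lam * T) := by linarith
  have hD : 0 < 1 - Real.exp (-lam * T) + α * β * lam + β * lam ^ 2 := by positivity
  have hs : 0 < 2 * Real.sqrt ((1 - Real.exp (-lam1 * T)) * β) + α * β := by positivity
  rw [div_le_div_iff₀ hD hs]
  have hsq : Real.sqrt ((1 - Real.exp (-lam1 * T)) * β) =
      Real.sqrt (1 - Real.exp (-lam1 * T)) * Real.sqrt β := Real.sqrt_mul hγ.le β
  have hamgm : 2 * Real.sqrt (1 - Real.exp (-lam1 * T)) * (Real.sqrt β * lam) ≤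
      (1 - Real.exp (-lam1 * T)) + β * lam ^ 2 := by
    have h := two_mul_le_add_sq (Real.sqrt (1 - Real.exp (-lam1 * T))) (Real.sqrt β * lam)
    have h1 : Real.sqrt (1 - Real.exp (-lam1 * T)) ^ 2 = 1 - Real.exp (-lam1 * T) :=
      Real.sq_sqrt hγ.le
    have h2 : Real.sqrt β ^ 2 = β := Real.sq_sqrt hβ.le
    nlinarith
  nlinarith [hamgm, hsq]
end
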